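/- The number of even involutions of length n that contain the pattern 132 exactly once and contain the pattern 213 exactly once equals 4^{(n−6)/4} if n ≥ 6 and n ≡ 2 (mod 4), and equals 0 otherwise; moreover, no even involution contains 132 exactly once and 123 exactly once, and no even involution contains 132 exactly once and 231 exactly once. -/

import Mathlib

open Finset

/-- The number of occurrences of the pattern `τ` (of length `k`) in the
permutation `π` (of length `n`): the number of strictly increasing index
sequences along which `π` is order-isomorphic to `τ`. -/
def occ {k n : ℕ} (τ : Equiv.Perm (Fin k)) (π : Equiv.Perm (Fin n)) : ℕ :=
  (Finset.univ.filter (fun f : Fin k → Fin n =>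
    (∀ a b : Fin k, a < b → f a < f b) ∧
    (∀ a b : Fin k, τ a < τ b ↔ π (f a) < π (f b)))).card

/-- The number of inversions of a permutation: pairs `i < j` with `π i > π j`. -/
def inversions {n : ℕ} (π : Equiv.Perm (Fin n)) : ℕ :=
  (Finset.univ.filter (fun p : Fin n × Fin n => p.1 < p.2 ∧ π p.2 < π p.1)).card

/-- The number of fixed points of a permutation. -/
def fixedPointCount {n : ℕ} (π : Equiv.Perm (Fin n)) : ℕ :=
  (Finset.univ.filter (fun j : Fin n => π j = j)).card

/-- The pattern `132` as a permutation of `Fin 3` (zero-indexed values `0,2,1`). -/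
def p132 : Equiv.Perm (Fin 3) := Equiv.swap 1 2

/-- Number of even involutions of length n containing 132 exactly once and a
given pattern τ exactly once. -/
def cnt {k : ℕ} (τ : Equiv.Perm (Fin k)) (n : ℕ) : ℕ :=
  (Finset.univ.filter (fun π : Equiv.Perm (Fin n) =>
    (∀ i, π (π i) = i) ∧ Even (inversions π) ∧ occ p132 π = 1 ∧ occ τ π = 1)).card

set_option linter.unusedSectionVars false
set_option linter.unreachableTactic false
set_option linter.unusedTactic false
set_option maxHeartbeats 1000000

namespace EI

/-! ### Pattern-condition lemmas for the four length-3 patterns -/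

variable {n : ℕ}

lemma hV132 (u v w : Fin n) :
    (∀ a b : Fin 3, p132 a < p132 b ↔ ![u, v, w] a < ![u, v, w] b) ↔ (u < w ∧ w < v) := by
  constructor
  · intro h
    exact ⟨(h 0 2).mp (by decide), (h 2 1).mp (by decide)⟩
  · rintro ⟨h1, h2⟩ a b
    match a, b with
    | 0, 0 => exact iff_of_false (by decide) (lt_irrefl u)
    | 0, 1 => exact iff_of_true (by decide) (lt_trans h1 h2)
    | 0, 2 => exact iff_of_true (by decide) h1
    | 1, 0 => exact iff_of_false (by decide) (asymm (lt_trans h1 h2))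
    | 1, 1 => exact iff_of_false (by decide) (lt_irrefl v)
    | 1, 2 => exact iff_of_false (by decide) (asymm h2)
    | 2, 0 => exact iff_of_false (by decide) (asymm h1)
    | 2, 1 => exact iff_of_true (by decide) h2
    | 2, 2 => exact iff_of_false (by decide) (lt_irrefl w)

lemma hV213 (u v w : Fin n) :
    (∀ a b : Fin 3, (Equiv.swap 0 1 : Equiv.Perm (Fin 3)) a < (Equiv.swap 0 1 : Equiv.Perm (Fin 3)) b ↔
      ![u, v, w] a < ![u, v, w] b) ↔ (v < u ∧ u < w) := by
  constructor
  · intro h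
    exact ⟨(h 1 0).mp (by decide), (h 0 2).mp (by decide)⟩
  · rintro ⟨h1, h2⟩ a b
    match a, b with
    | 0, 0 => exact iff_of_false (by decide) (lt_irrefl u)
    | 0, 1 => exact iff_of_false (by decide) (asymm h1)
    | 0, 2 => exact iff_of_true (by decide) h2
    | 1, 0 => exact iff_of_true (by decide) h1
    | 1, 1 => exact iff_of_false (by decide) (lt_irrefl v)
    | 1, 2 => exact iff_of_true (by decide) (lt_trans h1 h2)
    | 2, 0 => exact iff_of_false (by decide) (asymm h2)
    | 2, 1 => exact iff_of_false (by decide) (asymm (lt_trans h1 h2))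
    | 2, 2 => exact iff_of_false (by decide) (lt_irrefl w)

lemma hV123 (u v w : Fin n) :
    (∀ a b : Fin 3, (1 : Equiv.Perm (Fin 3)) a < (1 : Equiv.Perm (Fin 3)) b ↔
      ![u, v, w] a < ![u, v, w] b) ↔ (u < v ∧ v < w) := by
  constructor
  · intro h
    exact ⟨(h 0 1).mp (by decide), (h 1 2).mp (by decide)⟩
  · rintro ⟨h1, h2⟩ a b
    match a, b with
    | 0, 0 => exact iff_of_false (by decide) (lt_irrefl u)
    | 0, 1 => exact iff_of_true (by decide) h1
    | 0, 2 => exact iff_of_true (by decide) (lt_trans h1 h2)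
    | 1, 0 => exact iff_of_false (by decide) (asymm h1)
    | 1, 1 => exact iff_of_false (by decide) (lt_irrefl v)
    | 1, 2 => exact iff_of_true (by decide) h2
    | 2, 0 => exact iff_of_false (by decide) (asymm (lt_trans h1 h2))
    | 2, 1 => exact iff_of_false (by decide) (asymm h2)
    | 2, 2 => exact iff_of_false (by decide) (lt_irrefl w)

lemma hV231 (u v w : Fin n) :
    (∀ a b : Fin 3, (finRotate 3) a < (finRotate 3) b ↔
      ![u, v, w] a < ![u, v, w] b) ↔ (w < u ∧ u < v) := by
  constructor
  · intro h
    exact ⟨(h 2 0).mp (by decide), (h 0 1).mp (by decide)⟩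
  · rintro ⟨h1, h2⟩ a b
    match a, b with
    | 0, 0 => exact iff_of_false (by decide) (lt_irrefl u)
    | 0, 1 => exact iff_of_true (by decide) h2
    | 0, 2 => exact iff_of_false (by decide) (asymm h1)
    | 1, 0 => exact iff_of_false (by decide) (asymm h2)
    | 1, 1 => exact iff_of_false (by decide) (lt_irrefl v)
    | 1, 2 => exact iff_of_false (by decide) (asymm (lt_trans h1 h2))
    | 2, 0 => exact iff_of_true (by decide) h1
    | 2, 1 => exact iff_of_true (by decide) (lt_trans h1 h2)
    | 2, 2 => exact iff_of_false (by decide) (lt_irrefl w)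

lemma fin3_fun_eq {α : Type*} (f : Fin 3 → α) : f = ![f 0, f 1, f 2] := by
  funext a; fin_cases a <;> rfl

lemma mono3_iff (f : Fin 3 → Fin n) :
    (∀ a b : Fin 3, a < b → f a < f b) ↔ (f 0 < f 1 ∧ f 1 < f 2) := by
  constructor
  · intro h; exact ⟨h 0 1 (by decide), h 1 2 (by decide)⟩
  · rintro ⟨h1, h2⟩ a b hab
    fin_cases a <;> fin_cases b <;> first
      | exact absurd hab (by decide)
      | exact h1
      | exact h2
      | exact lt_trans h1 h2

lemma occ_eq_one_iff (τ : Equiv.Perm (Fin 3)) (π : Equiv.Perm (Fin n))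
    (V : Fin n → Fin n → Fin n → Prop)
    (hV : ∀ u v w : Fin n,
      (∀ a b : Fin 3, τ a < τ b ↔ ![u, v, w] a < ![u, v, w] b) ↔ V u v w) :
    occ τ π = 1 ↔
      ∃ i j k : Fin n, (i < j ∧ j < k ∧ V (π i) (π j) (π k)) ∧
        ∀ x y z : Fin n, (x < y ∧ y < z ∧ V (π x) (π y) (π z)) →
          x = i ∧ y = j ∧ z = k := by
  have hmem : ∀ f : Fin 3 → Fin n,
      (f ∈ Finset.univ.filter (fun f : Fin 3 → Fin n =>
        (∀ a b : Fin 3, a < b → f a < f b) ∧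
        (∀ a b : Fin 3, τ a < τ b ↔ π (f a) < π (f b)))) ↔
      (f 0 < f 1 ∧ f 1 < f 2 ∧ V (π (f 0)) (π (f 1)) (π (f 2))) := by
    intro f
    rw [Finset.mem_filter]
    simp only [Finset.mem_univ, true_and]
    rw [mono3_iff]
    have : (∀ a b : Fin 3, τ a < τ b ↔ π (f a) < π (f b)) ↔
        V (π (f 0)) (π (f 1)) (π (f 2)) := by
      rw [← hV (π (f 0)) (π (f 1)) (π (f 2))]
      constructor
      · intro h a b
        have ea : ![π (f 0), π (f 1), π (f 2)] a = π (f a) := by fin_cases a <;> rfl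
        have eb : ![π (f 0), π (f 1), π (f 2)] b = π (f b) := by fin_cases b <;> rfl
        rw [ea, eb]; exact h a b
      · intro h a b
        have ea : ![π (f 0), π (f 1), π (f 2)] a = π (f a) := by fin_cases a <;> rfl
        have eb : ![π (f 0), π (f 1), π (f 2)] b = π (f b) := by fin_cases b <;> rfl
        rw [← ea, ← eb]; exact h a b
    tauto
  rw [occ, Finset.card_eq_one]
  constructor
  · rintro ⟨g, hg⟩
    have hgmem : g ∈ _ := hg ▸ Finset.mem_singleton_self g
    rw [hmem] at hgmem
    refine ⟨g 0, g 1, g 2, ⟨hgmem.1, hgmem.2.1, hgmem.2.2⟩, ?_⟩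
    intro x y z hxyz
    have hin : (![x, y, z] : Fin 3 → Fin n) ∈ Finset.univ.filter (fun f : Fin 3 → Fin n =>
        (∀ a b : Fin 3, a < b → f a < f b) ∧
        (∀ a b : Fin 3, τ a < τ b ↔ π (f a) < π (f b))) := by
      rw [hmem]; exact ⟨hxyz.1, hxyz.2.1, hxyz.2.2⟩
    rw [hg, Finset.mem_singleton] at hin
    have this := hin
    refine ⟨?_, ?_, ?_⟩
    · have := congrFun this 0; simpa using this
    · have := congrFun this 1; simpa using this
    · have := congrFun this 2; simpa using this
  · rintro ⟨i, j, k, hocc, huniq⟩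
    refine ⟨![i, j, k], ?_⟩
    ext f
    rw [hmem, Finset.mem_singleton]
    constructor
    · intro hf
      obtain ⟨h1, h2, h3⟩ := huniq (f 0) (f 1) (f 2) ⟨hf.1, hf.2.1, hf.2.2⟩
      rw [fin3_fun_eq f, h1, h2, h3]
    · intro hf
      subst hf
      exact ⟨hocc.1, hocc.2.1, hocc.2.2⟩


def fm (π : Equiv.Perm (Fin n)) : ℕ → ℕ := fun i => if h : i < n then (π ⟨i, h⟩ : ℕ) else i

lemma fm_val (π : Equiv.Perm (Fin n)) (i : Fin n) : fm π i.val = (π i).val := by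
  simp [fm]

lemma fm_lt (π : Equiv.Perm (Fin n)) {i : ℕ} (h : i < n) : fm π i < n := by
  simp only [fm, dif_pos h]; exact (π ⟨i, h⟩).isLt

lemma fm_inv (π : Equiv.Perm (Fin n)) (hinv : ∀ i, π (π i) = i) {i : ℕ} (h : i < n) :
    fm π (fm π i) = i := by
  simp only [fm, dif_pos h, Fin.is_lt, dif_pos]
  rw [Fin.eta]
  rw [hinv ⟨i, h⟩]

lemma uniq_transfer (π : Equiv.Perm (Fin n)) (VF : Fin n → Fin n → Fin n → Prop)
    (W : ℕ → ℕ → ℕ → Prop) (hW : ∀ u v w : Fin n, VF u v w ↔ W u.val v.val w.val) :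
    (∃ i j k : Fin n, (i < j ∧ j < k ∧ VF (π i) (π j) (π k)) ∧
        ∀ x y z : Fin n, (x < y ∧ y < z ∧ VF (π x) (π y) (π z)) →
          x = i ∧ y = j ∧ z = k) ↔
    (∃ a b c : ℕ, (a < b ∧ b < c ∧ c < n ∧ W (fm π a) (fm π b) (fm π c)) ∧
        ∀ x y z : ℕ, (x < y ∧ y < z ∧ z < n ∧ W (fm π x) (fm π y) (fm π z)) →
          x = a ∧ y = b ∧ z = c) := by
  constructor
  · rintro ⟨i, j, k, ⟨hij, hjk, hV⟩, huniq⟩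
    refine ⟨i.val, j.val, k.val, ⟨hij, hjk, k.isLt, ?_⟩, ?_⟩
    · rw [fm_val, fm_val, fm_val]
      exact (hW _ _ _).mp hV
    · intro x y z ⟨hxy, hyz, hzn, hw⟩
      have hxn : x < n := by omega
      have hyn : y < n := by omega
      have hVf : VF (π ⟨x, hxn⟩) (π ⟨y, hyn⟩) (π ⟨z, hzn⟩) := by
        rw [hW]
        have e1 : fm π x = (π ⟨x, hxn⟩).val := by simp [fm, dif_pos hxn]
        have e2 : fm π y = (π ⟨y, hyn⟩).val := by simp [fm, dif_pos hyn]
        have e3 : fm π z = (π ⟨z, hzn⟩).val := by simp [fm, dif_pos hzn]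
        rw [e1, e2, e3] at hw
        exact hw
      obtain ⟨e1, e2, e3⟩ := huniq ⟨x, hxn⟩ ⟨y, hyn⟩ ⟨z, hzn⟩ ⟨hxy, hyz, hVf⟩
      exact ⟨congrArg Fin.val e1, congrArg Fin.val e2, congrArg Fin.val e3⟩
  · rintro ⟨a, b, c, ⟨hab, hbc, hcn, hw⟩, huniq⟩
    have han : a < n := by omega
    have hbn : b < n := by omega
    refine ⟨⟨a, han⟩, ⟨b, hbn⟩, ⟨c, hcn⟩, ⟨hab, hbc, ?_⟩, ?_⟩
    · rw [hW]
      have e1 : fm π a = (π ⟨a, han⟩).val := by simp [fm, dif_pos han]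
      have e2 : fm π b = (π ⟨b, hbn⟩).val := by simp [fm, dif_pos hbn]
      have e3 : fm π c = (π ⟨c, hcn⟩).val := by simp [fm, dif_pos hcn]
      rw [e1, e2, e3] at hw
      exact hw
    · intro x y z ⟨hxy, hyz, hV⟩
      have : W (fm π x.val) (fm π y.val) (fm π z.val) := by
        rw [fm_val, fm_val, fm_val]
        exact (hW _ _ _).mp hV
      obtain ⟨e1, e2, e3⟩ := huniq x.val y.val z.val ⟨hxy, hyz, z.isLt, this⟩
      exact ⟨Fin.ext e1, Fin.ext e2, Fin.ext e3⟩


-- ℕ-model uniqueness predicates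
def U132 (n : ℕ) (f : ℕ → ℕ) : Prop :=
  ∃ a b c, (a < b ∧ b < c ∧ c < n ∧ f a < f c ∧ f c < f b) ∧
    ∀ x y z, (x < y ∧ y < z ∧ z < n ∧ f x < f z ∧ f z < f y) → x = a ∧ y = b ∧ z = c

def U213 (n : ℕ) (f : ℕ → ℕ) : Prop :=
  ∃ a b c, (a < b ∧ b < c ∧ c < n ∧ f b < f a ∧ f a < f c) ∧
    ∀ x y z, (x < y ∧ y < z ∧ z < n ∧ f y < f x ∧ f x < f z) → x = a ∧ y = b ∧ z = c

def U123 (n : ℕ) (f : ℕ → ℕ) : Prop :=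
  ∃ a b c, (a < b ∧ b < c ∧ c < n ∧ f a < f b ∧ f b < f c) ∧
    ∀ x y z, (x < y ∧ y < z ∧ z < n ∧ f x < f y ∧ f y < f z) → x = a ∧ y = b ∧ z = c

def U231 (n : ℕ) (f : ℕ → ℕ) : Prop :=
  ∃ a b c, (a < b ∧ b < c ∧ c < n ∧ f c < f a ∧ f a < f b) ∧
    ∀ x y z, (x < y ∧ y < z ∧ z < n ∧ f z < f x ∧ f x < f y) → x = a ∧ y = b ∧ z = c

section Model
variable {n : ℕ} {f : ℕ → ℕ}
variable (hb : ∀ i, i < n → f i < n) (hv : ∀ i, i < n → f (f i) = i)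

include hb hv

lemma hinj : ∀ i, i < n → ∀ j, j < n → f i = f j → i = j := by
  intro i hi j hj hij
  have h1 := hv i hi
  have h2 := hv j hj
  rw [hij] at h1; omega

-- the 132 gadget from uniqueness of 132 and involutivity
lemma gadget132 (h132 : U132 n f) :
    ∃ a c, a + 1 < c ∧ c < n ∧ f a = a ∧ f (a+1) = c ∧ f c = a + 1 ∧
      ((a < a+1 ∧ a+1 < c ∧ c < n ∧ f a < f c ∧ f c < f (a+1)) ∧
       ∀ x y z, (x < y ∧ y < z ∧ z < n ∧ f x < f z ∧ f z < f y) → x = a ∧ y = a+1 ∧ z = c) := by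
  obtain ⟨a, b, c, ⟨hab, hbc, hcn, hv1, hv2⟩, hu⟩ := h132
  have hbn : b < n := by omega
  have han : a < n := by omega
  have hfa : f a < n := hb a han
  have hfb : f b < n := hb b hbn
  have hfc : f c < n := hb c hcn
  -- step 1 : b = a+1
  have hb1 : b = a + 1 := by
    by_contra hne
    have hg : a + 1 < b := by omega
    set g := a + 1 with hgdef
    have hgn : g < n := by omega
    have hfg : f g < n := hb g hgn
    have hgc : f g ≠ f c := fun h => by have := hinj hb hv g hgn c hcn h; omega
    have hgb : f g ≠ f b := fun h => by have := hinj hb hv g hgn b hbn h; omega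
    rcases lt_trichotomy (f g) (f c) with h | h | h
    · obtain ⟨e1, e2, e3⟩ := hu g b c ⟨by omega, hbc, hcn, by omega, hv2⟩; omega
    · omega
    · rcases lt_trichotomy (f g) (f b) with h' | h' | h'
      · obtain ⟨e1, e2, e3⟩ := hu a g c ⟨by omega, by omega, hcn, by omega, by omega⟩; omega
      · omega
      · obtain ⟨e1, e2, e3⟩ := hu a g b ⟨by omega, by omega, hbn, by omega, by omega⟩; omega
  subst hb1
  -- step 2 : symmetry gives f a = a, f c = a+1, f (a+1) = c
  have hsym : f a = a ∧ f c = a + 1 ∧ f (a+1) = c := by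
    have h1 := hv a han
    have h2 := hv (a+1) hbn
    have h3 := hv c hcn
    obtain ⟨e1, e2, e3⟩ := hu (f a) (f c) (f (a+1))
      ⟨hv1, hv2, hb (a+1) hbn, by rw [h1, h2]; omega, by rw [h2, h3]; omega⟩
    exact ⟨e1, by omega, by omega⟩
  exact ⟨a, c, by omega, hcn, hsym.1, hsym.2.2, hsym.2.1, ⟨⟨by omega, by omega, hcn, hv1, hv2⟩, hu⟩⟩

end Model


section Model2
variable {n : ℕ} {f : ℕ → ℕ}
variable (hb : ∀ i, i < n → f i < n) (hv : ∀ i, i < n → f (f i) = i)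
include hb hv

lemma gadget213 (h213 : U213 n f) :
    ∃ d e, d < e ∧ e + 1 < n ∧ f d = e ∧ f e = d ∧ f (e+1) = e + 1 ∧
      ((d < e ∧ e < e+1 ∧ e+1 < n ∧ f e < f d ∧ f d < f (e+1)) ∧
       ∀ x y z, (x < y ∧ y < z ∧ z < n ∧ f y < f x ∧ f x < f z) → x = d ∧ y = e ∧ z = e+1) := by
  obtain ⟨d, e, c, ⟨hde, hec, hcn, hv1, hv2⟩, hu⟩ := h213
  have hdn : d < n := by omega
  have hen : e < n := by omega
  -- tightness: c = e+1
  have hc1 : c = e + 1 := by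
    by_contra hne
    set w := e + 1 with hwdef
    have hwn : w < n := by omega
    have hwd : f w ≠ f d := fun h => by have := hinj hb hv w hwn d hdn h; omega
    rcases lt_trichotomy (f w) (f d) with h | h | h
    · obtain ⟨e1, e2, e3⟩ := hu d w c ⟨by omega, by omega, hcn, h, hv2⟩; omega
    · omega
    · obtain ⟨e1, e2, e3⟩ := hu d e w ⟨hde, by omega, hwn, hv1, h⟩; omega
  subst hc1
  have hsym : f d = e ∧ f e = d ∧ f (e+1) = e+1 := by
    have h1 := hv d hdn
    have h2 := hv e hen
    have h3 := hv (e+1) hcn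
    obtain ⟨e1, e2, e3⟩ := hu (f e) (f d) (f (e+1))
      ⟨hv1, hv2, hb (e+1) hcn, by rw [h1, h2]; omega, by rw [h2, h3]; omega⟩
    exact ⟨by omega, by omega, by omega⟩
  exact ⟨d, e, hde, hcn, hsym.1, hsym.2.1, hsym.2.2,
    ⟨⟨hde, by omega, hcn, by omega, by omega⟩, hu⟩⟩

theorem classify (h132 : U132 n f) (h213 : U213 n f) :
    ∃ a, n = 2*a+4 ∧ f a = a ∧ f (a+1) = a+2 ∧ f (a+2) = a+1 ∧ f (a+3) = a+3 ∧
      (∀ p, p < a → a+4 ≤ f p ∧ f p < n) ∧ (∀ p, a+4 ≤ p → p < n → f p < a) := by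
  obtain ⟨a, c, hac, hcn, hfa, hfb, hfc, ⟨hO, hu⟩⟩ := gadget132 hb hv h132
  obtain ⟨d, e, hde, hfn, hfd, hfe, hff, ⟨hO2, hu2⟩⟩ := gadget213 hb hv h213
  have han : a < n := by omega
  have hbn : a + 1 < n := by omega
  -- c = a+2
  have hc2 : c = a + 2 := by
    by_contra hne
    set g := a + 2 with hgdef
    have hgn : g < n := by omega
    have hgc : f g ≠ f c := fun h => by have := hinj hb hv g hgn c hcn h; omega
    have hga : f g ≠ f a := fun h => by have := hinj hb hv g hgn a han h; omega
    have hgb : f g ≠ f (a+1) := fun h => by have := hinj hb hv g hgn (a+1) hbn h; omega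
    rcases lt_trichotomy (f g) (f c) with h | h | h
    · -- f g < a+1, so f g < a or f g = a impossible; f g < a gives a 213
      have hfg : f g < a := by omega
      obtain ⟨e1, e2, e3⟩ := hu2 a g c ⟨by omega, by omega, hcn, by omega, by omega⟩
      -- c = e+1 is the fixed point of 213 gadget, but f c = a+1 < c
      rw [← e3] at hff
      omega
    · omega
    · rcases lt_trichotomy (f g) (f (a+1)) with h' | h' | h'
      · obtain ⟨e1, e2, e3⟩ := hu a (a+1) g ⟨by omega, by omega, hgn, by omega, by omega⟩; omega
      · omega
      · obtain ⟨e1, e2, e3⟩ := hu a g c ⟨by omega, by omega, hcn, by omega, by omega⟩; omega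
  subst hc2
  -- e = d+1
  have hd2 : e = d + 1 := by
    by_contra hne
    set g := d + 1 with hgdef
    have hgn : g < n := by omega
    have hdn : d < n := by omega
    have hen : e < n := by omega
    have hgd : f g ≠ f d := fun h => by have := hinj hb hv g hgn d hdn h; omega
    have hge : f g ≠ f e := fun h => by have := hinj hb hv g hgn e hen h; omega
    have hgf : f g ≠ f (e+1) := fun h => by have := hinj hb hv g hgn (e+1) hfn h; omega
    have hgd' : f g ≠ e := fun hh => hgd (by rw [hh, hfd])
    have hgf' : f g ≠ e + 1 := fun hh => hgf (by rw [hh, hff])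
    rcases lt_trichotomy (f g) e with h | h | h
    · obtain ⟨e1, e2, e3⟩ := hu2 d g (e+1) ⟨by omega, by omega, hfn, by omega, by omega⟩; omega
    · exact hgd' h
    · rcases lt_trichotomy (f g) (e+1) with h' | h' | h'
      · omega
      · exact hgf' h'
      · -- f g > e+1 = f (e+1): 132 at (d, g, e+1)
        obtain ⟨e1, e2, e3⟩ := hu d g (e+1) ⟨by omega, by omega, hfn, by omega, by omega⟩
        -- d = a, but f a = a and f d = e > d
        omega
  subst hd2
  -- link : d = a+1
  have hlink : d = a + 1 := by
    rcases lt_trichotomy d (a+1) with h | h | h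
    · -- d < a+1 : d = a impossible; d+1 = a; d+2 = a; d+2 < a
      have hda : d ≠ a := fun hh => by rw [hh] at hfd; omega
      have hd1a : d + 1 ≠ a := fun hh => by rw [← hh] at hfa; omega
      rcases lt_trichotomy (d+2) a with h2 | h2 | h2
      · -- O132 (d, a+1, a+2)
        obtain ⟨e1, e2, e3⟩ := hu d (a+1) (a+2) ⟨by omega, by omega, by omega, by omega, by omega⟩
        omega
      · -- d+2 = a : O132 (d+1, a+1, a+2) , values: f (d+1) = d = a-2
        obtain ⟨e1, e2, e3⟩ := hu (d+1) (a+1) (a+2) ⟨by omega, by omega, by omega, by omega, by omega⟩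
        omega
      · omega
    · omega
    · -- d > a+1: cases d = a+2 or d > a+2
      rcases lt_trichotomy d (a+2) with h2 | h2 | h2
      · omega
      · -- d = a+2: f(a+2) = a+1 but f d = d+1 = a+3
        rw [h2] at hfd; omega
      · -- O213 (a+1, a+2, d)
        obtain ⟨e1, e2, e3⟩ := hu2 (a+1) (a+2) d ⟨by omega, by omega, by omega, by omega, by omega⟩
        omega
  subst hlink
  -- so e = a+2; consistency gives f (a+3) = a+3 from hff
  have he2 : f (a+3) = a+3 := hff
  have hL : ∀ p, p < a → a+4 ≤ f p ∧ f p < n := by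
    intro p hp
    have hpn : p < n := by omega
    have hfp : f p < n := hb p hpn
    have h1 : f p ≠ a := fun hh => by
      have := hv p hpn; rw [hh] at this; rw [hfa] at this; omega
    have h2 : f p ≠ a+1 := fun hh => by
      have := hv p hpn; rw [hh] at this; rw [hfb] at this; omega
    have h3 : f p ≠ a+2 := fun hh => by
      have := hv p hpn; rw [hh] at this; rw [hfc] at this; omega
    have h4 : f p ≠ a+3 := fun hh => by
      have := hv p hpn; rw [hh] at this; rw [he2] at this; omega
    by_contra hcon
    have : f p < a := by omega
    obtain ⟨e1, e2, e3⟩ := hu p (a+1) (a+2) ⟨by omega, by omega, by omega, by omega, by omega⟩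
    omega
  have hR : ∀ p, a+4 ≤ p → p < n → f p < a := by
    intro p hp hpn
    have hfp : f p < n := hb p hpn
    have h1 : f p ≠ a := fun hh => by
      have := hv p hpn; rw [hh] at this; rw [hfa] at this; omega
    have h2 : f p ≠ a+1 := fun hh => by
      have := hv p hpn; rw [hh] at this; rw [hfb] at this; omega
    have h3 : f p ≠ a+2 := fun hh => by
      have := hv p hpn; rw [hh] at this; rw [hfc] at this; omega
    have h4 : f p ≠ a+3 := fun hh => by
      have := hv p hpn; rw [hh] at this; rw [he2] at this; omega
    by_contra hcon
    have : a + 3 < f p := by omega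
    obtain ⟨e1, e2, e3⟩ := hu2 (a+1) (a+2) p ⟨by omega, by omega, hpn, by omega, by omega⟩
    omega
  -- counting: n = 2a+4
  have hcount : n = 2*a+4 := by
    have hle1 : (Finset.range a).card ≤ (Finset.Ico (a+4) n).card := by
      apply Finset.card_le_card_of_injOn f
      · intro p hp
        rw [Finset.mem_coe, Finset.mem_range] at hp
        rw [Finset.mem_coe, Finset.mem_Ico]
        exact ⟨(hL p hp).1, (hL p hp).2⟩
      · intro p hp q hq hpq
        rw [Finset.coe_range, Set.mem_Iio] at hp hq
        exact hinj hb hv p (by omega) q (by omega) hpq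
    have hle2 : (Finset.Ico (a+4) n).card ≤ (Finset.range a).card := by
      apply Finset.card_le_card_of_injOn f
      · intro p hp
        rw [Finset.mem_coe, Finset.mem_Ico] at hp
        rw [Finset.mem_coe, Finset.mem_range]
        exact hR p hp.1 hp.2
      · intro p hp q hq hpq
        rw [Finset.coe_Ico, Set.mem_Ico] at hp hq
        exact hinj hb hv p (by omega) q (by omega) hpq
    rw [Finset.card_range, Nat.card_Ico] at hle1 hle2
    omega
  exact ⟨a, hcount, hfa, hfb, hfc, he2, hL, hR⟩

end Model2

section Model3
variable {n : ℕ} {f : ℕ → ℕ}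
variable (hb : ∀ i, i < n → f i < n) (hv : ∀ i, i < n → f (f i) = i)
include hb hv

theorem no123 (h132 : U132 n f) (h123 : U123 n f) : False := by
  obtain ⟨a, c, hac, hcn, hfa, hfb, hfc, ⟨hO, hu⟩⟩ := gadget132 hb hv h132
  obtain ⟨x, y, z, ⟨hxy, hyz, hzn, hw1, hw2⟩, hu3⟩ := h123
  have hxn : x < n := by omega
  have hyn : y < n := by omega
  -- fixed points by symmetry
  have hfix : f x = x ∧ f y = y ∧ f z = z := by
    obtain ⟨e1, e2, e3⟩ := hu3 (f x) (f y) (f z)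
      ⟨hw1, hw2, hb z hzn, by rw [hv x hxn, hv y hyn]; omega, by rw [hv y hyn, hv z hzn]; omega⟩
    exact ⟨e1, e2, e3⟩
  obtain ⟨hfx, hfy, hfz⟩ := hfix
  have hxa : x ≠ a + 1 := fun hh => by rw [← hh] at hfb; omega
  have hya : y ≠ a + 1 := fun hh => by rw [← hh] at hfb; omega
  have hza : z ≠ a + 1 := fun hh => by rw [← hh] at hfb; omega
  have hxc : x ≠ c := fun hh => by rw [← hh] at hfc; omega
  have hyc : y ≠ c := fun hh => by rw [← hh] at hfc; omega
  have hzc : z ≠ c := fun hh => by rw [← hh] at hfc; omega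
  rcases eq_or_ne a x with hax | hax
  · -- a = x
    subst hax
    rcases lt_or_gt_of_ne hzc with h | h
    · -- z < c : second 132 at (a, y, c)
      obtain ⟨e1, e2, e3⟩ := hu a y c ⟨by omega, by omega, hcn, by omega, by omega⟩
      omega
    · -- z > c : second 123 at (a, a+1, z)
      obtain ⟨e1, e2, e3⟩ := hu3 a (a+1) z ⟨by omega, by omega, hzn, by omega, by omega⟩
      omega
  rcases eq_or_ne a y with hay | hay
  · -- a = y : 123 at (x, a, a+1)
    subst hay
    obtain ⟨e1, e2, e3⟩ := hu3 x a (a+1) ⟨hxy, by omega, by omega, by omega, by omega⟩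
    rw [← e3] at hfz; omega
  rcases eq_or_ne a z with haz | haz
  · -- a = z : 123 at (x, y, a+1)
    subst haz
    obtain ⟨e1, e2, e3⟩ := hu3 x y (a+1) ⟨hxy, by omega, by omega, by omega, by omega⟩
    omega
  -- a is a fourth fixed point
  rcases lt_trichotomy a x with h | h | h
  · obtain ⟨e1, e2, e3⟩ := hu3 a x y ⟨h, hxy, hyn, by omega, by omega⟩; omega
  · omega
  rcases lt_trichotomy a y with h' | h' | h'
  · obtain ⟨e1, e2, e3⟩ := hu3 x a y ⟨h, h', hyn, by omega, by omega⟩; omega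
  · omega
  rcases lt_trichotomy a z with h'' | h'' | h''
  · obtain ⟨e1, e2, e3⟩ := hu3 x y a ⟨hxy, h', by omega, by omega, by omega⟩; omega
  · omega
  · obtain ⟨e1, e2, e3⟩ := hu3 y z a ⟨hyz, h'', by omega, by omega, by omega⟩; omega

theorem no231 (h132 : U132 n f) (h231 : U231 n f) : False := by
  obtain ⟨a, c, hac, hcn, hfa, hfb, hfc, ⟨hO, hu⟩⟩ := gadget132 hb hv h132
  obtain ⟨x, y, z, ⟨hxy, hyz, hzn, hw1, hw2⟩, hu2⟩ := h231
  have hxn : x < n := by omega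
  have hyn : y < n := by omega
  have hfxn : f x < n := hb x hxn
  have hfyn : f y < n := hb y hyn
  have hfzn : f z < n := hb z hzn
  -- step 1 : y = x + 1
  have hy1 : y = x + 1 := by
    by_contra hne
    set w := x + 1 with hwdef
    have hwn : w < n := by omega
    have hwx : f w ≠ f x := fun h => by have := hinj hb hv w hwn x hxn h; omega
    have hwy : f w ≠ f y := fun h => by have := hinj hb hv w hwn y hyn h; omega
    have hwz : f w ≠ f z := fun h => by have := hinj hb hv w hwn z hzn h; omega
    rcases lt_trichotomy (f w) (f x) with h | h | h
    · rcases lt_trichotomy (f w) (f z) with h' | h' | h'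
      · -- involution trick : 231 at (f w, f z, f x)
        obtain ⟨e1, e2, e3⟩ := hu2 (f w) (f z) (f x)
          ⟨h', by omega, hfxn, by rw [hv w hwn, hv x hxn]; omega,
           by rw [hv w hwn, hv z hzn]; omega⟩
        have := hv w hwn
        rw [e1] at this
        omega
      · omega
      · obtain ⟨e1, e2, e3⟩ := hu2 w y z ⟨by omega, hyz, hzn, by omega, by omega⟩; omega
    · omega
    · obtain ⟨e1, e2, e3⟩ := hu2 x w z ⟨by omega, by omega, hzn, by omega, by omega⟩; omega
  subst hy1
  -- step 2 : z = x + 2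
  have hz1 : z = x + 2 := by
    by_contra hne
    set w := x + 2 with hwdef
    have hwn : w < n := by omega
    have hwx : f w ≠ f x := fun h => by have := hinj hb hv w hwn x hxn h; omega
    rcases lt_trichotomy (f w) (f x) with h | h | h
    · obtain ⟨e1, e2, e3⟩ := hu2 x (x+1) w ⟨by omega, by omega, hwn, by omega, by omega⟩; omega
    · omega
    · obtain ⟨e1, e2, e3⟩ := hu2 x w z ⟨by omega, by omega, hzn, by omega, by omega⟩; omega
  subst hz1
  -- p = f (x+2), r = f (x+1), facts
  set p := f (x+2) with hpdef
  set r := f (x+1) with hrdef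
  have hfp : f p = x + 2 := hv (x+2) hzn
  have hfr : f r = x + 1 := hv (x+1) hyn
  have hrp : p < f x ∧ f x < r := ⟨hw1, hw2⟩
  -- f x = p + 1
  have hfx1 : f x = p + 1 := by
    by_contra hne
    have hun : p + 1 < n := by omega
    set g := f (p+1) with hgdef
    have hgn : g < n := hb (p+1) hun
    have hfg : f g = p + 1 := hv (p+1) hun
    have hgx : g ≠ x := fun hh => by rw [hh] at hfg; omega
    have hgy : g ≠ x+1 := fun hh => by rw [hh] at hfg; omega
    have hgz : g ≠ x+2 := fun hh => by rw [hh] at hfg; omega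
    rcases lt_trichotomy g x with h | h | h
    · obtain ⟨e1, e2, e3⟩ := hu2 g (x+1) (x+2) ⟨by omega, by omega, hzn, by omega, by omega⟩
      omega
    · exact hgx h
    · obtain ⟨e1, e2, e3⟩ := hu2 x (x+1) g ⟨by omega, by omega, hgn, by omega, by omega⟩
      omega
  have hfp1 : f (p+1) = x := by
    rw [← hfx1]; exact hv x hxn
  -- main case analysis on position of p relative to x
  rcases lt_trichotomy (p+1) x with hcase | hcase | hcase
  · -- p + 1 < x
    rcases lt_trichotomy r x with hr | hr | hr
    · obtain ⟨e1, e2, e3⟩ := hu2 (p+1) r x ⟨by omega, hr, hxn, by omega, by omega⟩; omega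
    · rw [hr] at hfr; omega
    · obtain ⟨e1, e2, e3⟩ := hu2 (p+1) (x+1) (x+2) ⟨by omega, by omega, hzn, by omega, by omega⟩
      omega
  · -- p + 1 = x : the C1 configuration
    have hx1 : 1 ≤ x := by omega
    have hfxx : f x = x := by omega
    have hfpx : f (x-1) = x + 2 := by
      have : p = x - 1 := by omega
      rw [← this]; exact hfp
    have hfzx : f (x+2) = x - 1 := by omega
    have hrne : r ≠ x + 2 := fun hh => by rw [hh] at hfr; omega
    rcases lt_trichotomy r (x+1) with hr | hr | hr
    · -- r ≤ x: r = f(x+1) and f x = x ... r > p+1 = x so impossible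
      omega
    · -- r = x+1 : C1a, use the 132 gadget
      have hfy1 : f (x+1) = x + 1 := by omega
      -- establish non-membership of gadget in block
      rcases eq_or_ne (a+1) (x-1) with hs1 | hs1
      · -- c = x+2, a = x-2
        have hcx : c = x + 2 := by rw [← hs1] at hfpx; omega
        have hax2 : a = x - 2 := by omega
        have hx2 : 2 ≤ x := by omega
        obtain ⟨e1, e2, e3⟩ := hu (x-2) (x-1) x
          ⟨by omega, by omega, hxn, by rw [show x-2 = a from by omega, hfa]; omega,
           by rw [hfpx]; omega⟩
        omega
      · have ha1x : a + 1 ≠ x := fun hh => by rw [hh] at hfb; omega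
        have ha1y : a + 1 ≠ x+1 := fun hh => by rw [hh] at hfb; omega
        have ha1z : a + 1 ≠ x+2 := fun hh => by rw [hh] at hfb; omega
        have hcz : c ≠ x+2 := fun hh => by rw [hh] at hfc; omega
        have hcp : c ≠ x-1 := fun hh => by rw [hh] at hfc; omega
        have hcx : c ≠ x := fun hh => by rw [hh] at hfc; omega
        have hcy : c ≠ x+1 := fun hh => by rw [hh] at hfc; omega
        have hax : a ≠ x := fun hh => by omega
        have hax1 : a ≠ x+1 := fun hh => by omega
        have hap : a ≠ x-1 := fun hh => by rw [← hh] at hfpx; omega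
        have haz : a ≠ x+2 := fun hh => by rw [← hh] at hfzx; omega
        rcases lt_trichotomy a (x-1) with hpos | hpos | hpos
        · -- a < x-1, so a+1 < x-1 (by hs1)
          have ha1 : a + 1 < x - 1 := by omega
          rcases lt_trichotomy c (x-1) with hc | hc | hc
          · obtain ⟨e1, e2, e3⟩ := hu a (x-1) (x+2)
              ⟨by omega, by omega, hzn, by rw [hfa, hfzx]; omega, by rw [hfzx, hfpx]; omega⟩
            omega
          · omega
          · have hc2 : c > x + 2 := by
              rcases lt_trichotomy c (x+2) with hcc | hcc | hcc
              · exfalso; rcases (by omega : c = x ∨ c = x+1) with hcc' | hcc'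
                · exact hcx hcc'
                · exact hcy hcc'
              · exact absurd hcc hcz
              · exact hcc
            obtain ⟨e1, e2, e3⟩ := hu a (x-1) c
              ⟨by omega, by omega, hcn, by rw [hfa, hfc]; omega, by rw [hfc, hfpx]; omega⟩
            omega
        · omega
        · -- a > x-1 : a > x+2 (others excluded)
          have ha2 : a > x + 2 := by
            rcases (by omega : a = x ∨ a = x+1 ∨ a = x+2 ∨ a > x+2) with h | h | h | h
            · exact absurd h hax
            · exact absurd h hax1
            · exact absurd h haz
            · exact h
          obtain ⟨e1, e2, e3⟩ := hu x (a+1) c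
            ⟨by omega, by omega, hcn, by rw [hfxx, hfc]; omega, by rw [hfc, hfb]; omega⟩
          omega
    · -- r > x+1, and r ≠ x+2, so r > x+2 : C1b
      have hr2 : r > x + 2 := by omega
      obtain ⟨e1, e2, e3⟩ := hu2 (x-1) (x+1) r
        ⟨by omega, by omega, hb (x+1) hyn, by rw [hfr, hfpx]; omega, by rw [hfpx]; omega⟩
      omega
  · -- p + 1 > x
    rcases (by omega : p = x ∨ p = x + 1 ∨ p = x + 2 ∨ p > x + 2) with hc | hc | hc | hc
    · rw [hc] at hfp; omega
    · rw [hc] at hfp; omega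
    · -- p = x+2 : f(x+2) = x+2 contradicts? no: p = f(x+2) = x+2 fixed, f x = x+3
      have hfx3 : f x = x + 3 := by omega
      have hx3n : x + 3 < n := by rw [← hfx3]; exact hfxn
      have hf3 : f (x+3) = x := by rw [← hfx3]; exact hv x hxn
      obtain ⟨e1, e2, e3⟩ := hu2 x (x+1) (x+3)
        ⟨by omega, by omega, hx3n, by rw [hf3, hfx3]; omega, by rw [hfx3]; omega⟩
      omega
    · have hp1n : p + 1 < n := by rw [← hfx1]; exact hfxn
      obtain ⟨e1, e2, e3⟩ := hu2 x (x+1) (p+1)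
        ⟨by omega, by omega, hp1n, by rw [hfp1, hfx1]; omega, by rw [hfx1]; omega⟩
      omega

end Model3

lemma card_modEq_fixed {α : Type*} [DecidableEq α] :
    ∀ (N : ℕ) (s : Finset α) (g : α → α), s.card ≤ N → (∀ x ∈ s, g x ∈ s) →
      (∀ x ∈ s, g (g x) = x) →
      s.card % 2 = (s.filter fun x => g x = x).card % 2 := by
  intro N
  induction N with
  | zero =>
    intro s g hc _ _
    have : s = ∅ := Finset.card_eq_zero.mp (by omega)
    subst this
    simp
  | succ N ih =>
    intro s g hc hmem hinv
    by_cases hex : ∃ x ∈ s, g x ≠ x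
    · obtain ⟨x, hx, hgx⟩ := hex
      have hgxs : g x ∈ s := hmem x hx
      have hne : g x ≠ x := hgx
      set s' := (s.erase x).erase (g x) with hs'
      have hxs' : x ∉ s' := by simp [hs', Finset.mem_erase]
      have hgxs' : g x ∉ s' := by simp [hs', Finset.mem_erase]
      have hmem' : ∀ y ∈ s', y ∈ s ∧ y ≠ x ∧ y ≠ g x := by
        intro y hy
        simp only [hs', Finset.mem_erase] at hy
        exact ⟨hy.2.2, hy.2.1, hy.1⟩
      have hcard' : s'.card + 2 = s.card := by
        rw [hs', Finset.card_erase_of_mem (Finset.mem_erase.mpr ⟨hne, hgxs⟩),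
          Finset.card_erase_of_mem hx]
        have h2 : 2 ≤ s.card := Finset.one_lt_card.mpr ⟨x, hx, g x, hgxs, fun h => hne h.symm⟩
        omega
      have hmem2 : ∀ y ∈ s', g y ∈ s' := by
        intro y hy
        obtain ⟨hys, hyx, hygx⟩ := hmem' y hy
        simp only [hs', Finset.mem_erase]
        refine ⟨?_, ?_, hmem y hys⟩
        · intro h
          exact hyx (by rw [← hinv y hys, h, hinv x hx])
        · intro h
          exact hygx (by rw [← hinv y hys, h])
      have hinv2 : ∀ y ∈ s', g (g y) = y := fun y hy => hinv y (hmem' y hy).1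
      have hfil : s.filter (fun z => g z = z) = s'.filter (fun z => g z = z) := by
        ext y
        simp only [Finset.mem_filter, hs', Finset.mem_erase]
        constructor
        · rintro ⟨hys, hgy⟩
          refine ⟨⟨?_, ?_, hys⟩, hgy⟩
          · intro h; subst h; rw [hinv x hx] at hgy; exact hne hgy.symm
          · intro h; subst h; exact hne hgy
        · rintro ⟨⟨_, _, hys⟩, hgy⟩
          exact ⟨hys, hgy⟩
      rw [hfil, ← hcard']
      have := ih s' g (by omega) hmem2 hinv2
      omega
    · push_neg at hex
      rw [Finset.filter_true_of_mem hex]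

lemma inversions_parity {n : ℕ} (π : Equiv.Perm (Fin n)) (hinv : ∀ i, π (π i) = i) :
    inversions π % 2 = ((univ.filter fun i : Fin n => i < π i).card) % 2 := by
  have hmem : ∀ p ∈ univ.filter (fun p : Fin n × Fin n => p.1 < p.2 ∧ π p.2 < π p.1),
      (π p.2, π p.1) ∈ univ.filter (fun p : Fin n × Fin n => p.1 < p.2 ∧ π p.2 < π p.1) := by
    intro p hp
    rw [Finset.mem_filter] at hp ⊢
    refine ⟨Finset.mem_univ _, hp.2.2, ?_⟩
    simp only [hinv p.1, hinv p.2]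
    exact hp.2.1
  have hginv : ∀ p ∈ univ.filter (fun p : Fin n × Fin n => p.1 < p.2 ∧ π p.2 < π p.1),
      ((π (π p.1 : Fin n), π (π p.2 : Fin n)) : Fin n × Fin n) = p := by
    intro p _
    simp only [hinv p.1, hinv p.2]
  have h1 := card_modEq_fixed (univ.filter
      (fun p : Fin n × Fin n => p.1 < p.2 ∧ π p.2 < π p.1)).card
      (univ.filter (fun p : Fin n × Fin n => p.1 < p.2 ∧ π p.2 < π p.1))
      (fun p => (π p.2, π p.1)) le_rfl hmem hginv
  have h2 : ((univ.filter (fun p : Fin n × Fin n => p.1 < p.2 ∧ π p.2 < π p.1)).filter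
      fun p => (π p.2, π p.1) = p).card = (univ.filter fun i : Fin n => i < π i).card := by
    apply Finset.card_bij (fun p _ => p.1)
    · intro p hp
      rw [Finset.mem_filter] at hp
      rw [Finset.mem_filter] at hp
      rw [Finset.mem_filter]
      obtain ⟨⟨_, h3, _⟩, h5⟩ := hp
      have : π p.1 = p.2 := congrArg Prod.snd h5
      rw [this]
      exact ⟨Finset.mem_univ _, h3⟩
    · intro p hp q hq hpq
      rw [Finset.mem_filter] at hp hq
      have ep : π p.1 = p.2 := congrArg Prod.snd hp.2
      have eq' : π q.1 = q.2 := congrArg Prod.snd hq.2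
      have : p.2 = q.2 := by rw [← ep, ← eq', hpq]
      exact Prod.ext hpq this
    · intro b hb
      rw [Finset.mem_filter] at hb
      refine ⟨(b, π b), ?_, rfl⟩
      rw [Finset.mem_filter, Finset.mem_filter]
      refine ⟨⟨Finset.mem_univ _, hb.2, by rw [hinv b]; exact hb.2⟩, ?_⟩
      simp only [hinv b]
  rw [inversions, h1, h2]


lemma upcard (π : Equiv.Perm (Fin n)) (a : ℕ) (hn : n = 2*a+4)
    (hfa : fm π a = a) (hf1 : fm π (a+1) = a+2) (hf2 : fm π (a+2) = a+1)
    (hf3 : fm π (a+3) = a+3)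
    (hL : ∀ p, p < a → a+4 ≤ fm π p) (hR : ∀ p, a+4 ≤ p → p < n → fm π p < a) :
    (univ.filter fun i : Fin n => i < π i).card = a + 1 := by
  have key : ∀ i : Fin n, (i < π i) ↔ (i.val < a ∨ i.val = a + 1) := by
    intro i
    have hival : (i < π i) ↔ (i.val < fm π i.val) := by
      rw [Fin.lt_def]
      have : fm π i.val = (π i).val := by simp [fm]
      rw [this]
    rw [hival]
    rcases (by omega : i.val < a ∨ i.val = a ∨ i.val = a+1 ∨ i.val = a+2 ∨ i.val = a+3 ∨
        (a+4 ≤ i.val ∧ i.val < n)) with h | h | h | h | h | h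
    · have := hL i.val h; constructor <;> intro <;> omega
    · rw [h, hfa]; constructor <;> intro <;> omega
    · rw [h, hf1]; constructor <;> intro <;> omega
    · rw [h, hf2]; constructor <;> intro <;> omega
    · rw [h, hf3]; constructor <;> intro <;> omega
    · have := hR i.val h.1 h.2; constructor <;> intro <;> omega
  have hcard : (univ.filter fun i : Fin n => i < π i).card =
      ((range n).filter fun i => i < a ∨ i = a + 1).card := by
    apply Finset.card_bij (fun i _ => i.val)
    · intro i hi
      rw [Finset.mem_filter] at hi
      rw [Finset.mem_filter, Finset.mem_range]
      exact ⟨i.isLt, (key i).mp hi.2⟩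
    · intro i _ j _ hij
      exact Fin.ext hij
    · intro b hb
      rw [Finset.mem_filter, Finset.mem_range] at hb
      refine ⟨⟨b, hb.1⟩, ?_, rfl⟩
      rw [Finset.mem_filter]
      exact ⟨Finset.mem_univ _, (key ⟨b, hb.1⟩).mpr hb.2⟩
  rw [hcard]
  have : (range n).filter (fun i => i < a ∨ i = a + 1) = range a ∪ {a+1} := by
    ext x
    simp only [Finset.mem_filter, Finset.mem_range, Finset.mem_union, Finset.mem_singleton]
    omega
  rw [this, Finset.card_union_of_disjoint (by simp), Finset.card_range,
    Finset.card_singleton]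


section Constr

variable {m : ℕ} {g s s' : ℕ → ℕ}

lemma av132' (hs' : ∀ p, p < m → s' p < m) (hs's : ∀ p, p < m → s (s' p) = p)
    (h : ∀ i j k, i < j → j < k → k < m → ¬(s i < s k ∧ s k < s j)) :
    ∀ i j k, i < j → j < k → k < m → ¬(s' i < s' k ∧ s' k < s' j) := by
  intro i j k hij hjk hk ⟨h1, h2⟩
  have hi : i < m := by omega
  have hj : j < m := by omega
  exact h (s' i) (s' k) (s' j) h1 h2 (hs' j hj)
    ⟨by rw [hs's i hi, hs's j hj]; omega, by rw [hs's j hj, hs's k hk]; omega⟩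

lemma av213' (hs' : ∀ p, p < m → s' p < m) (hs's : ∀ p, p < m → s (s' p) = p)
    (h : ∀ i j k, i < j → j < k → k < m → ¬(s j < s i ∧ s i < s k)) :
    ∀ i j k, i < j → j < k → k < m → ¬(s' j < s' i ∧ s' i < s' k) := by
  intro i j k hij hjk hk ⟨h1, h2⟩
  have hi : i < m := by omega
  have hj : j < m := by omega
  exact h (s' j) (s' i) (s' k) h1 h2 (hs' k hk)
    ⟨by rw [hs's i hi, hs's j hj]; omega, by rw [hs's j hj, hs's k hk]; omega⟩

lemma g_high (hs : ∀ p, p < m → s p < m) (hgL : ∀ p, p < m → g p = m + 4 + s p) :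
    ∀ p, p < m → m + 4 ≤ g p ∧ g p < 2*m+4 := by
  intro p hp
  rw [hgL p hp]
  have := hs p hp
  omega

lemma g_low (hs' : ∀ p, p < m → s' p < m)
    (hg0 : g m = m) (hg1 : g (m+1) = m+2) (hg2 : g (m+2) = m+1) (hg3 : g (m+3) = m+3)
    (hgR : ∀ p, m+4 ≤ p → p < 2*m+4 → g p = s' (p - (m+4))) :
    ∀ p, m ≤ p → p < 2*m+4 → g p ≤ m + 3 := by
  intro p h1 h2
  rcases (by omega : p = m ∨ p = m+1 ∨ p = m+2 ∨ p = m+3 ∨ (m+4 ≤ p ∧ p < 2*m+4)) with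
    h | h | h | h | h
  · have e : g p = m := by rw [h, hg0]
    omega
  · have e : g p = m+2 := by rw [h, hg1]
    omega
  · have e : g p = m+1 := by rw [h, hg2]
    omega
  · have e : g p = m+3 := by rw [h, hg3]
    omega
  · rw [hgR p h.1 h.2]
    have := hs' (p - (m+4)) (by omega)
    omega

lemma g_R_low (hs' : ∀ p, p < m → s' p < m)
    (hgR : ∀ p, m+4 ≤ p → p < 2*m+4 → g p = s' (p - (m+4))) :
    ∀ p, m + 4 ≤ p → p < 2*m+4 → g p < m := by
  intro p h1 h2
  rw [hgR p h1 h2]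
  exact hs' (p - (m+4)) (by omega)

variable (hs : ∀ p, p < m → s p < m) (hs' : ∀ p, p < m → s' p < m)
variable (hss' : ∀ p, p < m → s' (s p) = p) (hs's : ∀ p, p < m → s (s' p) = p)
variable (av132 : ∀ i j k, i < j → j < k → k < m → ¬(s i < s k ∧ s k < s j))
variable (av213 : ∀ i j k, i < j → j < k → k < m → ¬(s j < s i ∧ s i < s k))
variable (hgL : ∀ p, p < m → g p = m + 4 + s p)
variable (hg0 : g m = m) (hg1 : g (m+1) = m+2) (hg2 : g (m+2) = m+1) (hg3 : g (m+3) = m+3)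
variable (hgR : ∀ p, m+4 ≤ p → p < 2*m+4 → g p = s' (p - (m+4)))

include hs hs' hs's av132 hgL hg0 hg1 hg2 hg3 hgR in
lemma gU132 : U132 (2*m+4) g := by
  refine ⟨m, m+1, m+2, ⟨by omega, by omega, by omega, by rw [hg0, hg2]; omega,
    by rw [hg2, hg1]; omega⟩, ?_⟩
  intro x y z ⟨hxy, hyz, hzn, h1, h2⟩
  rcases (by omega : x < m ∨ x = m ∨ (m+1 ≤ x ∧ x ≤ m+3) ∨ m+4 ≤ x) with hx | hx | hx | hx
  · -- x in L: then y, z in L, 132 in s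
    exfalso
    have hgx := g_high hs hgL x hx
    have hz : z < m := by
      by_contra hz
      have := g_low hs' hg0 hg1 hg2 hg3 hgR z (by omega) hzn
      omega
    have hy : y < m := by omega
    simp only [hgL x hx, hgL y hy, hgL z hz] at h1 h2
    exact av132 x y z hxy hyz hz ⟨by omega, by omega⟩
  · -- x = m
    have hgx : g x = m := by rw [hx, hg0]
    have hz : z ≤ m + 3 := by
      by_contra hz
      have := g_R_low hs' hgR z (by omega) hzn
      omega
    have hy2 : m + 1 ≤ y := by omega
    rcases (by omega : (y = m+1 ∧ z = m+2) ∨ (y = m+1 ∧ z = m+3) ∨ (y = m+2 ∧ z = m+3))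
      with ⟨hy', hz'⟩ | ⟨hy', hz'⟩ | ⟨hy', hz'⟩
    · exact ⟨hx, hy', hz'⟩
    · exfalso
      have e1 : g y = m + 2 := by rw [hy', hg1]
      have e2 : g z = m + 3 := by rw [hz', hg3]
      omega
    · exfalso
      have e1 : g y = m + 1 := by rw [hy', hg2]
      have e2 : g z = m + 3 := by rw [hz', hg3]
      omega
  · -- x in {m+1, m+2, m+3}: impossible
    exfalso
    have hgx : m + 1 ≤ g x := by
      rcases (by omega : x = m+1 ∨ x = m+2 ∨ x = m+3) with h | h | h
      · have e : g x = m+2 := by rw [h, hg1]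
        omega
      · have e : g x = m+1 := by rw [h, hg2]
        omega
      · have e : g x = m+3 := by rw [h, hg3]
        omega
    have hz : z ≤ m + 3 := by
      by_contra hz
      have := g_R_low hs' hgR z (by omega) hzn
      omega
    obtain ⟨hx', hy', hz'⟩ := (by omega : x = m+1 ∧ y = m+2 ∧ z = m+3)
    have e1 : g x = m + 2 := by rw [hx', hg1]
    have e2 : g y = m + 1 := by rw [hy', hg2]
    have e3 : g z = m + 3 := by rw [hz', hg3]
    omega
  · -- x in R: all in R, 132 in s'
    exfalso
    have hyR : m + 4 ≤ y := by omega
    have hzR : m + 4 ≤ z := by omega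
    simp only [hgR x hx (by omega), hgR y hyR (by omega), hgR z hzR hzn] at h1 h2
    exact av132' hs' hs's av132 (x - (m+4)) (y - (m+4)) (z - (m+4))
      (by omega) (by omega) (by omega) ⟨h1, h2⟩

include hs hs' hs's av213 hgL hg0 hg1 hg2 hg3 hgR in
lemma gU213 : U213 (2*m+4) g := by
  refine ⟨m+1, m+2, m+3, ⟨by omega, by omega, by omega, by rw [hg2, hg1]; omega,
    by rw [hg1, hg3]; omega⟩, ?_⟩
  intro x y z ⟨hxy, hyz, hzn, h1, h2⟩
  -- pattern: g y < g x < g z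
  rcases (by omega : z < m ∨ (m ≤ z ∧ z ≤ m+3) ∨ m+4 ≤ z) with hz | hz | hz
  · -- all in L, 213 in s
    exfalso
    have hx : x < m := by omega
    have hy : y < m := by omega
    simp only [hgL x hx, hgL y hy, hgL z hz] at h1 h2
    exact av213 x y z hxy hyz hz ⟨by omega, by omega⟩
  · -- z in G: x, y in G too
    have hgz : g z ≤ m + 3 := g_low hs' hg0 hg1 hg2 hg3 hgR z (by omega) hzn
    have hx : m ≤ x := by
      by_contra hx
      have := g_high hs hgL x (by omega)
      omega
    rcases (by omega : (x = m ∧ y = m+1 ∧ z = m+2) ∨ (x = m ∧ y = m+1 ∧ z = m+3) ∨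
        (x = m ∧ y = m+2 ∧ z = m+3) ∨ (x = m+1 ∧ y = m+2 ∧ z = m+3)) with
      ⟨hx', hy', hz'⟩ | ⟨hx', hy', hz'⟩ | ⟨hx', hy', hz'⟩ | ⟨hx', hy', hz'⟩
    · exfalso
      have e1 : g x = m := by rw [hx', hg0]
      have e2 : g y = m + 2 := by rw [hy', hg1]
      omega
    · exfalso
      have e1 : g x = m := by rw [hx', hg0]
      have e2 : g y = m + 2 := by rw [hy', hg1]
      omega
    · exfalso
      have e1 : g x = m := by rw [hx', hg0]
      have e2 : g y = m + 1 := by rw [hy', hg2]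
      omega
    · exact ⟨hx', hy', hz'⟩
  · -- z in R: x, y in R too, 213 in s'
    exfalso
    have hgz : g z < m := g_R_low hs' hgR z hz hzn
    have hx : m + 4 ≤ x := by
      rcases (by omega : x < m ∨ (m ≤ x ∧ x ≤ m+3) ∨ m+4 ≤ x) with hx | hx | hx
      · exfalso
        have := g_high hs hgL x hx
        omega
      · exfalso
        have h1' : m ≤ g x := by
          rcases (by omega : x = m ∨ x = m+1 ∨ x = m+2 ∨ x = m+3) with h | h | h | h
          · have e : g x = m := by rw [h, hg0]
            omega
          · have e : g x = m+2 := by rw [h, hg1]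
            omega
          · have e : g x = m+1 := by rw [h, hg2]
            omega
          · have e : g x = m+3 := by rw [h, hg3]
            omega
        omega
      · exact hx
    have hy : m + 4 ≤ y := by omega
    simp only [hgR x hx (by omega), hgR y hy (by omega), hgR z hz hzn] at h1 h2
    exact av213' hs' hs's av213 (x - (m+4)) (y - (m+4)) (z - (m+4))
      (by omega) (by omega) (by omega) ⟨h1, h2⟩

end Constr

lemma fm_inj (π : Equiv.Perm (Fin n)) {p q : ℕ} (hp : p < n) (hq : q < n)
    (h : fm π p = fm π q) : p = q := by
  simp only [fm, dif_pos hp, dif_pos hq] at h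
  have := π.injective (Fin.ext h)
  exact congrArg Fin.val this

lemma fm_surj (π : Equiv.Perm (Fin n)) {v : ℕ} (hv : v < n) :
    ∃ p, p < n ∧ fm π p = v := by
  refine ⟨(π.symm ⟨v, hv⟩).val, (π.symm ⟨v, hv⟩).isLt, ?_⟩
  simp only [fm, dif_pos (π.symm ⟨v, hv⟩).isLt, Fin.eta]
  rw [Equiv.apply_symm_apply]

-- bounded avoidance predicate
def AvN (m : ℕ) (f : ℕ → ℕ) : Prop :=
  (∀ i, i < m → ∀ j, j < m → ∀ k, k < m → i < j → j < k → ¬(f i < f k ∧ f k < f j)) ∧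
  (∀ i, i < m → ∀ j, j < m → ∀ k, k < m → i < j → j < k → ¬(f j < f i ∧ f i < f k))

open scoped Classical in
noncomputable def A (m : ℕ) : Finset (Equiv.Perm (Fin m)) :=
  univ.filter (fun σ => AvN m (fm σ))

section Ins
variable {m : ℕ}

def ins0f (σ : Equiv.Perm (Fin (m+1))) : Fin (m+2) → Fin (m+2) := fun x =>
  if h : x.val = 0 then ⟨m+1, by omega⟩
  else ⟨(σ ⟨x.val - 1, by omega⟩).val, by have := (σ ⟨x.val - 1, by omega⟩).isLt; omega⟩

def ins1f (σ : Equiv.Perm (Fin (m+1))) : Fin (m+2) → Fin (m+2) := fun x =>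
  if h : x.val = 0 then ⟨(σ ⟨0, by omega⟩).val, by have := (σ ⟨0, by omega⟩).isLt; omega⟩
  else if (σ ⟨x.val - 1, by omega⟩).val < (σ ⟨0, by omega⟩).val
    then ⟨(σ ⟨x.val - 1, by omega⟩).val, by have := (σ ⟨x.val - 1, by omega⟩).isLt; omega⟩
    else ⟨(σ ⟨x.val - 1, by omega⟩).val + 1,
      by have := (σ ⟨x.val - 1, by omega⟩).isLt; omega⟩

lemma fm_eq (σ : Equiv.Perm (Fin (m+1))) {p : ℕ} (h : p < m+1) :
    fm σ p = (σ ⟨p, h⟩).val := by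
  simp only [fm, dif_pos h]

lemma ins0f_inj (σ : Equiv.Perm (Fin (m+1))) : Function.Injective (ins0f σ) := by
  intro x y hxy
  unfold ins0f at hxy
  by_cases hx : x.val = 0 <;> by_cases hy : y.val = 0
  · exact Fin.ext (by omega)
  · rw [dif_pos hx, dif_neg hy] at hxy
    have := congrArg Fin.val hxy
    have h2 := (σ ⟨y.val - 1, by omega⟩).isLt
    simp at this
    omega
  · rw [dif_neg hx, dif_pos hy] at hxy
    have := congrArg Fin.val hxy
    have h2 := (σ ⟨x.val - 1, by omega⟩).isLt
    simp at this
    omega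
  · rw [dif_neg hx, dif_neg hy] at hxy
    have := congrArg Fin.val hxy
    simp only at this
    have := σ.injective (Fin.ext this)
    have := congrArg Fin.val this
    simp only at this
    exact Fin.ext (by omega)

lemma ins1f_inj (σ : Equiv.Perm (Fin (m+1))) : Function.Injective (ins1f σ) := by
  intro x y hxy
  unfold ins1f at hxy
  by_cases hx : x.val = 0 <;> by_cases hy : y.val = 0
  · exact Fin.ext (by omega)
  · rw [dif_pos hx, dif_neg hy] at hxy
    have := congrArg Fin.val hxy
    split_ifs at this with h
    · simp only at this
      have h2 := σ.injective (Fin.ext this.symm)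
      have h3 := congrArg Fin.val h2
      simp only at h3
      omega
    · simp only at this
      omega
  · rw [dif_neg hx, dif_pos hy] at hxy
    have := congrArg Fin.val hxy
    split_ifs at this with h
    · simp only at this
      have h2 := σ.injective (Fin.ext this)
      have h3 := congrArg Fin.val h2
      simp only at h3
      omega
    · simp only at this
      omega
  · rw [dif_neg hx, dif_neg hy] at hxy
    have hval := congrArg Fin.val hxy
    split_ifs at hval with h1 h2 h2
    · simp only at hval
      have h3 := σ.injective (Fin.ext hval)
      have h4 := congrArg Fin.val h3
      simp only at h4
      exact Fin.ext (by omega)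
    · simp only at hval
      omega
    · simp only at hval
      omega
    · simp only at hval
      have h3 := σ.injective (Fin.ext (by omega : (σ ⟨x.val - 1, by omega⟩).val = (σ ⟨y.val - 1, by omega⟩).val))
      have h4 := congrArg Fin.val h3
      simp only at h4
      exact Fin.ext (by omega)

noncomputable def ins0 (σ : Equiv.Perm (Fin (m+1))) : Equiv.Perm (Fin (m+2)) :=
  Equiv.ofBijective (ins0f σ) (Finite.injective_iff_bijective.mp (ins0f_inj σ))

noncomputable def ins1 (σ : Equiv.Perm (Fin (m+1))) : Equiv.Perm (Fin (m+2)) :=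
  Equiv.ofBijective (ins1f σ) (Finite.injective_iff_bijective.mp (ins1f_inj σ))

lemma ins0_apply (σ : Equiv.Perm (Fin (m+1))) (x : Fin (m+2)) : ins0 σ x = ins0f σ x := rfl

lemma ins1_apply (σ : Equiv.Perm (Fin (m+1))) (x : Fin (m+2)) : ins1 σ x = ins1f σ x := rfl

lemma fm_ins0_zero (σ : Equiv.Perm (Fin (m+1))) : fm (ins0 σ) 0 = m + 1 := by
  have h0 : (0:ℕ) < m+2 := by omega
  simp only [fm, dif_pos h0, ins0_apply]
  simp [ins0f]

lemma fm_ins0_pos (σ : Equiv.Perm (Fin (m+1))) {p : ℕ} (h1 : 1 ≤ p) (h2 : p < m+2) :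
    fm (ins0 σ) p = fm σ (p - 1) := by
  simp only [fm, dif_pos h2, dif_pos (by omega : p - 1 < m+1), ins0_apply]
  simp only [ins0f, dif_neg (by omega : ¬(p = 0))]

lemma fm_ins1_zero (σ : Equiv.Perm (Fin (m+1))) : fm (ins1 σ) 0 = fm σ 0 := by
  have h0 : (0:ℕ) < m+2 := by omega
  simp only [fm, dif_pos h0, dif_pos (by omega : (0:ℕ) < m+1), ins1_apply]
  simp [ins1f]

lemma fm_ins1_pos (σ : Equiv.Perm (Fin (m+1))) {p : ℕ} (h1 : 1 ≤ p) (h2 : p < m+2) :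
    fm (ins1 σ) p = if fm σ (p-1) < fm σ 0 then fm σ (p-1) else fm σ (p-1) + 1 := by
  have e1 : fm σ (p-1) = (σ ⟨p - 1, by omega⟩).val := fm_eq σ (by omega)
  have e0 : fm σ 0 = (σ ⟨0, by omega⟩).val := fm_eq σ (by omega)
  rw [e1, e0]
  simp only [fm, dif_pos h2, ins1_apply]
  simp only [ins1f, dif_neg (by omega : ¬(p = 0))]
  split_ifs with h
  · rfl
  · rfl

end Ins

section Ins2
variable {m : ℕ}

lemma mem_A {m' : ℕ} (σ : Equiv.Perm (Fin m')) : σ ∈ A m' ↔ AvN m' (fm σ) := by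
  simp [A]

lemma apply_val_eq_fm {n : ℕ} (π : Equiv.Perm (Fin n)) (x : Fin n) :
    (π x).val = fm π x.val := by simp [fm]

lemma av_ins0 (σ : Equiv.Perm (Fin (m+1))) (h : AvN (m+1) (fm σ)) :
    AvN (m+2) (fm (ins0 σ)) := by
  constructor
  · intro i hi j hj k hk hij hjk ⟨h1, h2⟩
    rcases Nat.eq_zero_or_pos i with hi0 | hi0
    · subst hi0
      rw [fm_ins0_zero] at h1
      rw [fm_ins0_pos σ (by omega) hk] at h1
      have := fm_lt σ (by omega : k - 1 < m+1)
      omega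
    · rw [fm_ins0_pos σ (by omega) hi, fm_ins0_pos σ (by omega) hk] at h1
      rw [fm_ins0_pos σ (by omega) hk, fm_ins0_pos σ (by omega) hj] at h2
      exact h.1 (i-1) (by omega) (j-1) (by omega) (k-1) (by omega) (by omega) (by omega) ⟨h1, h2⟩
  · intro i hi j hj k hk hij hjk ⟨h1, h2⟩
    rcases Nat.eq_zero_or_pos i with hi0 | hi0
    · subst hi0
      rw [fm_ins0_zero] at h2
      rw [fm_ins0_pos σ (by omega) hk] at h2
      have := fm_lt σ (by omega : k - 1 < m+1)
      omega
    · rw [fm_ins0_pos σ (by omega) hj, fm_ins0_pos σ (by omega) hi] at h1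
      rw [fm_ins0_pos σ (by omega) hi, fm_ins0_pos σ (by omega) hk] at h2
      exact h.2 (i-1) (by omega) (j-1) (by omega) (k-1) (by omega) (by omega) (by omega) ⟨h1, h2⟩

lemma av_ins1 (σ : Equiv.Perm (Fin (m+1))) (h : AvN (m+1) (fm σ)) :
    AvN (m+2) (fm (ins1 σ)) := by
  have hc : fm σ 0 < m + 1 := fm_lt σ (by omega)
  have hne : ∀ p, 1 ≤ p → p < m+1 → fm σ p ≠ fm σ 0 := by
    intro p h1 h2 hcon
    have := fm_inj σ h2 (by omega : (0:ℕ) < m+1) hcon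
    omega
  constructor
  · intro i hi j hj k hk hij hjk ⟨h1, h2⟩
    rcases Nat.eq_zero_or_pos i with hi0 | hi0
    · subst hi0
      rw [fm_ins1_zero] at h1
      rw [fm_ins1_pos σ (by omega) hk] at h1 h2
      rw [fm_ins1_pos σ (by omega) hj] at h2
      have hvk : fm σ 0 < fm σ (k-1) := by
        have := hne (k-1) (by omega) (by omega)
        split_ifs at h1 <;> omega
      rcases Nat.eq_zero_or_pos (j - 1) with hj1 | hj1
      · -- j = 1
        rw [hj1] at h2
        split_ifs at h2 <;> omega
      · have hvj : fm σ (k-1) < fm σ (j-1) := by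
          split_ifs at h2 <;> omega
        exact h.1 0 (by omega) (j-1) (by omega) (k-1) (by omega) (by omega) (by omega)
          ⟨hvk, hvj⟩
    · rw [fm_ins1_pos σ (by omega) hi, fm_ins1_pos σ (by omega) hk] at h1
      rw [fm_ins1_pos σ (by omega) hk, fm_ins1_pos σ (by omega) hj] at h2
      have e1 : fm σ (i-1) < fm σ (k-1) := by split_ifs at h1 <;> omega
      have e2 : fm σ (k-1) < fm σ (j-1) := by split_ifs at h2 <;> omega
      exact h.1 (i-1) (by omega) (j-1) (by omega) (k-1) (by omega) (by omega) (by omega) ⟨e1, e2⟩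
  · intro i hi j hj k hk hij hjk ⟨h1, h2⟩
    rcases Nat.eq_zero_or_pos i with hi0 | hi0
    · subst hi0
      rw [fm_ins1_zero] at h1 h2
      rw [fm_ins1_pos σ (by omega) hj] at h1
      rw [fm_ins1_pos σ (by omega) hk] at h2
      rcases Nat.eq_zero_or_pos (j - 1) with hj1 | hj1
      · rw [hj1] at h1
        split_ifs at h1 <;> omega
      · have hvj : fm σ (j-1) < fm σ 0 := by split_ifs at h1 <;> omega
        have hvk : fm σ 0 < fm σ (k-1) := by
          have := hne (k-1) (by omega) (by omega)
          split_ifs at h2 <;> omega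
        exact h.2 0 (by omega) (j-1) (by omega) (k-1) (by omega) (by omega) (by omega)
          ⟨hvj, hvk⟩
    · rw [fm_ins1_pos σ (by omega) hj, fm_ins1_pos σ (by omega) hi] at h1
      rw [fm_ins1_pos σ (by omega) hi, fm_ins1_pos σ (by omega) hk] at h2
      have e1 : fm σ (j-1) < fm σ (i-1) := by split_ifs at h1 <;> omega
      have e2 : fm σ (i-1) < fm σ (k-1) := by split_ifs at h2 <;> omega
      exact h.2 (i-1) (by omega) (j-1) (by omega) (k-1) (by omega) (by omega) (by omega) ⟨e1, e2⟩

end Ins2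

section Ins3
variable {m : ℕ}

lemma ins_surj (τ : Equiv.Perm (Fin (m+2))) (hτ : AvN (m+2) (fm τ)) :
    ∃ σ : Equiv.Perm (Fin (m+1)), AvN (m+1) (fm σ) ∧ (ins0 σ = τ ∨ ins1 σ = τ) := by
  have hT0lt : fm τ 0 < m + 2 := fm_lt τ (by omega)
  by_cases hT0 : fm τ 0 = m + 1
  · -- top case: τ = ins0 σ
    have hbnd : ∀ x : Fin (m+1), fm τ (x.val + 1) < m + 1 := by
      intro x
      have h1 : fm τ (x.val + 1) < m + 2 := fm_lt τ (by omega)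
      have h2 : fm τ (x.val + 1) ≠ m + 1 := by
        intro hcon
        have := fm_inj τ (by omega : x.val + 1 < m+2) (by omega : (0:ℕ) < m+2)
          (by rw [hcon, hT0])
        omega
      omega
    set σf : Fin (m+1) → Fin (m+1) := fun x => ⟨fm τ (x.val + 1), hbnd x⟩ with hσf
    have hinj : Function.Injective σf := by
      intro x y hxy
      have := congrArg Fin.val hxy
      simp only [hσf] at this
      have := fm_inj τ (by omega : x.val + 1 < m+2) (by omega : y.val + 1 < m+2) this
      exact Fin.ext (by omega)
    set σ : Equiv.Perm (Fin (m+1)) :=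
      Equiv.ofBijective σf (Finite.injective_iff_bijective.mp hinj) with hσ
    have hfmσ : ∀ p, p < m + 1 → fm σ p = fm τ (p + 1) := by
      intro p hp
      rw [fm_eq σ hp]
      rfl
    refine ⟨σ, ⟨?_, ?_⟩, Or.inl ?_⟩
    · intro i hi j hj k hk hij hjk ⟨h1, h2⟩
      simp only [hfmσ i hi, hfmσ j hj, hfmσ k hk] at h1 h2
      exact hτ.1 (i+1) (by omega) (j+1) (by omega) (k+1) (by omega) (by omega) (by omega)
        ⟨h1, h2⟩
    · intro i hi j hj k hk hij hjk ⟨h1, h2⟩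
      simp only [hfmσ i hi, hfmσ j hj, hfmσ k hk] at h1 h2
      exact hτ.2 (i+1) (by omega) (j+1) (by omega) (k+1) (by omega) (by omega) (by omega)
        ⟨h1, h2⟩
    · apply Equiv.ext
      intro x
      apply Fin.ext
      rw [apply_val_eq_fm, apply_val_eq_fm]
      rcases Nat.eq_zero_or_pos x.val with h0 | h0
      · rw [h0, fm_ins0_zero, h0] at *
        rw [hT0]
      · rw [fm_ins0_pos σ (by omega) x.isLt, hfmσ (x.val - 1) (by omega)]
        congr 1
        omega
  · -- general case: τ = ins1 σ
    have hc : fm τ 0 < m + 1 := by omega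
    have hT1 : fm τ 1 = fm τ 0 + 1 := by
      obtain ⟨g, hg, hTg⟩ := fm_surj τ (by omega : m + 1 < m + 2)
      have hg0 : g ≠ 0 := by intro hcon; rw [hcon] at hTg; omega
      have h01 : fm τ 0 < fm τ 1 := by
        have hne : fm τ 1 ≠ fm τ 0 := by
          intro hcon
          have := fm_inj τ (by omega : (1:ℕ) < m+2) (by omega : (0:ℕ) < m+2) hcon
          omega
        by_contra hcon
        have hlt : fm τ 1 < fm τ 0 := by omega
        have hg1 : g ≠ 1 := by intro h1; rw [h1] at hTg; omega
        exact hτ.2 0 (by omega) 1 (by omega) g (by omega) (by omega) (by omega)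
          ⟨hlt, by omega⟩
      by_contra hcon
      have hbig : fm τ 0 + 1 < fm τ 1 := by omega
      obtain ⟨p, hp, hTp⟩ := fm_surj τ (by omega : fm τ 0 + 1 < m + 2)
      have hp0 : p ≠ 0 := by intro h1; rw [h1] at hTp; omega
      have hp1 : p ≠ 1 := by intro h1; rw [h1] at hTp; omega
      exact hτ.1 0 (by omega) 1 (by omega) p (by omega) (by omega) (by omega)
        ⟨by omega, by omega⟩
    have hTne : ∀ p, 1 ≤ p → p < m+2 → fm τ p ≠ fm τ 0 := by
      intro p h1 h2 hcon
      have := fm_inj τ h2 (by omega : (0:ℕ) < m+2) hcon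
      omega
    have hbnd : ∀ x : Fin (m+1),
        (if fm τ (x.val + 1) < fm τ 0 then fm τ (x.val + 1) else fm τ (x.val + 1) - 1)
          < m + 1 := by
      intro x
      have h1 : fm τ (x.val + 1) < m + 2 := fm_lt τ (by omega)
      split_ifs <;> omega
    set σf : Fin (m+1) → Fin (m+1) := fun x =>
      ⟨if fm τ (x.val + 1) < fm τ 0 then fm τ (x.val + 1) else fm τ (x.val + 1) - 1,
        hbnd x⟩ with hσf
    have hinj : Function.Injective σf := by
      intro x y hxy
      have hv := congrArg Fin.val hxy
      simp only [hσf] at hv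
      have hx1 := hTne (x.val + 1) (by omega) (by omega)
      have hy1 := hTne (y.val + 1) (by omega) (by omega)
      have : fm τ (x.val + 1) = fm τ (y.val + 1) := by split_ifs at hv <;> omega
      have := fm_inj τ (by omega : x.val + 1 < m+2) (by omega : y.val + 1 < m+2) this
      exact Fin.ext (by omega)
    set σ : Equiv.Perm (Fin (m+1)) :=
      Equiv.ofBijective σf (Finite.injective_iff_bijective.mp hinj) with hσ
    have hfmσ : ∀ p, p < m + 1 →
        fm σ p = if fm τ (p + 1) < fm τ 0 then fm τ (p + 1) else fm τ (p + 1) - 1 := by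
      intro p hp
      rw [fm_eq σ hp]
      rfl
    have hσ0 : fm σ 0 = fm τ 0 := by
      rw [hfmσ 0 (by omega), hT1]
      split_ifs <;> omega
    have hmono : ∀ p q, 1 ≤ p → p < m+2 → 1 ≤ q → q < m+2 →
        (fm σ (p-1) < fm σ (q-1) ↔ fm τ p < fm τ q) := by
      intro p q hp1 hp2 hq1 hq2
      rw [hfmσ (p-1) (by omega), hfmσ (q-1) (by omega)]
      have e1 : p - 1 + 1 = p := by omega
      have e2 : q - 1 + 1 = q := by omega
      rw [e1, e2]
      have h1 := hTne p hp1 hp2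
      have h2 := hTne q hq1 hq2
      split_ifs <;> omega
    refine ⟨σ, ⟨?_, ?_⟩, Or.inr ?_⟩
    · intro i hi j hj k hk hij hjk ⟨h1, h2⟩
      have e1 : i = (i+1) - 1 := by omega
      have e2 : j = (j+1) - 1 := by omega
      have e3 : k = (k+1) - 1 := by omega
      rw [e1, e3] at h1
      rw [e3, e2] at h2
      rw [hmono (i+1) (k+1) (by omega) (by omega) (by omega) (by omega)] at h1
      rw [hmono (k+1) (j+1) (by omega) (by omega) (by omega) (by omega)] at h2
      exact hτ.1 (i+1) (by omega) (j+1) (by omega) (k+1) (by omega) (by omega) (by omega)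
        ⟨h1, h2⟩
    · intro i hi j hj k hk hij hjk ⟨h1, h2⟩
      have e1 : i = (i+1) - 1 := by omega
      have e2 : j = (j+1) - 1 := by omega
      have e3 : k = (k+1) - 1 := by omega
      rw [e2, e1] at h1
      rw [e1, e3] at h2
      rw [hmono (j+1) (i+1) (by omega) (by omega) (by omega) (by omega)] at h1
      rw [hmono (i+1) (k+1) (by omega) (by omega) (by omega) (by omega)] at h2
      exact hτ.2 (i+1) (by omega) (j+1) (by omega) (k+1) (by omega) (by omega) (by omega)
        ⟨h1, h2⟩
    · apply Equiv.ext
      intro x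
      apply Fin.ext
      rw [apply_val_eq_fm, apply_val_eq_fm]
      rcases Nat.eq_zero_or_pos x.val with h0 | h0
      · rw [h0, fm_ins1_zero, hσ0]
      · rw [fm_ins1_pos σ (by omega) x.isLt, hσ0,
          hfmσ (x.val - 1) (by omega)]
        have e1 : x.val - 1 + 1 = x.val := by omega
        rw [e1]
        have h1 := hTne x.val (by omega) x.isLt
        have h2 : fm τ x.val < m + 2 := fm_lt τ x.isLt
        split_ifs <;> omega

end Ins3

section Count
variable {m : ℕ}

lemma ins0_ne_ins1 (σ σ' : Equiv.Perm (Fin (m+1))) : ins0 σ ≠ ins1 σ' := by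
  intro h
  have h1 : fm (ins0 σ) 0 = fm (ins1 σ') 0 := by rw [h]
  rw [fm_ins0_zero, fm_ins1_zero] at h1
  have := fm_lt σ' (by omega : (0:ℕ) < m+1)
  omega

lemma ins0_inj (σ σ' : Equiv.Perm (Fin (m+1))) (h : ins0 σ = ins0 σ') : σ = σ' := by
  apply Equiv.ext
  intro x
  apply Fin.ext
  rw [apply_val_eq_fm, apply_val_eq_fm]
  have h1 : fm (ins0 σ) (x.val + 1) = fm (ins0 σ') (x.val + 1) := by rw [h]
  rw [fm_ins0_pos σ (by omega) (by omega), fm_ins0_pos σ' (by omega) (by omega)] at h1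
  simpa using h1

lemma ins1_inj (σ σ' : Equiv.Perm (Fin (m+1))) (h : ins1 σ = ins1 σ') : σ = σ' := by
  have hc : fm σ 0 = fm σ' 0 := by
    have h1 : fm (ins1 σ) 0 = fm (ins1 σ') 0 := by rw [h]
    rwa [fm_ins1_zero, fm_ins1_zero] at h1
  apply Equiv.ext
  intro x
  apply Fin.ext
  rw [apply_val_eq_fm, apply_val_eq_fm]
  have h1 : fm (ins1 σ) (x.val + 1) = fm (ins1 σ') (x.val + 1) := by rw [h]
  rw [fm_ins1_pos σ (by omega) (by omega), fm_ins1_pos σ' (by omega) (by omega)] at h1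
  simp only [Nat.add_sub_cancel] at h1
  rw [← hc] at h1
  split_ifs at h1 <;> omega

lemma card_A_step : (A (m+2)).card = 2 * (A (m+1)).card := by
  have := Finset.card_bij
    (s := (A (m+1)) ×ˢ (Finset.univ : Finset Bool)) (t := A (m+2))
    (fun p _ => if p.2 then ins0 p.1 else ins1 p.1)
    (by
      rintro ⟨σ, b⟩ hp
      rw [Finset.mem_product] at hp
      have hσ := (mem_A σ).mp hp.1
      cases b
      · simp only [Bool.false_eq_true, if_false]
        exact (mem_A _).mpr (av_ins1 σ hσ)
      · simp only [if_true]
        exact (mem_A _).mpr (av_ins0 σ hσ))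
    (by
      rintro ⟨σ, b⟩ hp ⟨σ', b'⟩ hp' heq
      cases b <;> cases b' <;> simp only [Bool.false_eq_true, if_true, if_false] at heq
      · rw [ins1_inj σ σ' heq]
      · exact absurd heq.symm (ins0_ne_ins1 σ' σ)
      · exact absurd heq (ins0_ne_ins1 σ σ')
      · rw [ins0_inj σ σ' heq])
    (by
      intro τ hτ
      obtain ⟨σ, hσav, hσ⟩ := ins_surj τ ((mem_A τ).mp hτ)
      rcases hσ with h | h
      · exact ⟨(σ, true), Finset.mem_product.mpr ⟨(mem_A σ).mpr hσav, Finset.mem_univ _⟩,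
          by simpa using h⟩
      · exact ⟨(σ, false), Finset.mem_product.mpr ⟨(mem_A σ).mpr hσav, Finset.mem_univ _⟩,
          by simpa using h⟩)
  rw [← this, Finset.card_product]
  simp [Fintype.card_bool]
  ring

lemma card_A_one : (A 1).card = 1 := by
  have : A 1 = Finset.univ := by
    ext σ
    simp only [Finset.mem_univ, iff_true]
    rw [mem_A]
    constructor
    · intro i hi j hj k hk hij hjk
      omega
    · intro i hi j hj k hk hij hjk
      omega
  rw [this, Finset.card_univ]
  simp

lemma card_A_pow (m : ℕ) : (A (m+1)).card = 2 ^ m := by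
  induction m with
  | zero => exact card_A_one
  | succ k ih =>
    rw [card_A_step, ih]
    ring

end Count

end EI

namespace EI
section Phi

variable {n m : ℕ}

lemma fm_eq' {N : ℕ} (π : Equiv.Perm (Fin N)) {p : ℕ} (h : p < N) :
    fm π p = (π ⟨p, h⟩).val := by
  simp only [fm, dif_pos h]

lemma fm_symm_fm {N : ℕ} (σ : Equiv.Perm (Fin N)) {p : ℕ} (h : p < N) :
    fm σ.symm (fm σ p) = p := by
  rw [fm_eq' σ h, fm_eq' σ.symm ((σ ⟨p, h⟩).isLt)]
  rw [Fin.eta, Equiv.symm_apply_apply]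

lemma fm_fm_symm {N : ℕ} (σ : Equiv.Perm (Fin N)) {p : ℕ} (h : p < N) :
    fm σ (fm σ.symm p) = p := by
  rw [fm_eq' σ.symm h, fm_eq' σ ((σ.symm ⟨p, h⟩).isLt)]
  rw [Fin.eta, Equiv.apply_symm_apply]

def phiF (σ : Equiv.Perm (Fin m)) (hn : n = 2*m+4) : Fin n → Fin n := fun x =>
  if h1 : x.val < m then ⟨m + 4 + fm σ x.val, by have := fm_lt σ h1; omega⟩
  else if h2 : x.val = m then ⟨m, by omega⟩
  else if h3 : x.val = m+1 then ⟨m+2, by omega⟩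
  else if h4 : x.val = m+2 then ⟨m+1, by omega⟩
  else if h5 : x.val = m+3 then ⟨m+3, by omega⟩
  else ⟨fm σ.symm (x.val - (m+4)), by
    have hx := x.isLt
    have := fm_lt σ.symm (show x.val - (m+4) < m by omega)
    omega⟩

variable (σ : Equiv.Perm (Fin m)) (hn : n = 2*m+4)

lemma phiF_val1 (x : Fin n) (h : x.val < m) :
    (phiF σ hn x).val = m + 4 + fm σ x.val := by
  simp only [phiF, dif_pos h]

lemma phiF_val2 (x : Fin n) (h : x.val = m) : (phiF σ hn x).val = m := by
  simp only [phiF, dif_neg (show ¬ x.val < m by omega), dif_pos h]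

lemma phiF_val3 (x : Fin n) (h : x.val = m+1) : (phiF σ hn x).val = m+2 := by
  simp only [phiF, dif_neg (show ¬ x.val < m by omega),
    dif_neg (show ¬ x.val = m by omega), dif_pos h]

lemma phiF_val4 (x : Fin n) (h : x.val = m+2) : (phiF σ hn x).val = m+1 := by
  simp only [phiF, dif_neg (show ¬ x.val < m by omega),
    dif_neg (show ¬ x.val = m by omega), dif_neg (show ¬ x.val = m+1 by omega), dif_pos h]

lemma phiF_val5 (x : Fin n) (h : x.val = m+3) : (phiF σ hn x).val = m+3 := by
  simp only [phiF, dif_neg (show ¬ x.val < m by omega),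
    dif_neg (show ¬ x.val = m by omega), dif_neg (show ¬ x.val = m+1 by omega),
    dif_neg (show ¬ x.val = m+2 by omega), dif_pos h]

lemma phiF_val6 (x : Fin n) (h : m+4 ≤ x.val) :
    (phiF σ hn x).val = fm σ.symm (x.val - (m+4)) := by
  simp only [phiF, dif_neg (show ¬ x.val < m by omega),
    dif_neg (show ¬ x.val = m by omega), dif_neg (show ¬ x.val = m+1 by omega),
    dif_neg (show ¬ x.val = m+2 by omega), dif_neg (show ¬ x.val = m+3 by omega)]

lemma phiF_invol : Function.Involutive (phiF σ hn) := by
  intro x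
  apply Fin.ext
  rcases (show x.val < m ∨ x.val = m ∨ x.val = m+1 ∨ x.val = m+2 ∨ x.val = m+3 ∨
      (m+4 ≤ x.val ∧ x.val < n) from by have := x.isLt; omega) with
    h | h | h | h | h | h
  · have e1 : (phiF σ hn x).val = m + 4 + fm σ x.val := phiF_val1 σ hn x h
    have hlt := fm_lt σ h
    have e2 : (phiF σ hn (phiF σ hn x)).val =
        fm σ.symm ((phiF σ hn x).val - (m+4)) := phiF_val6 σ hn _ (by omega)
    rw [e2, e1]
    have e3 : m + 4 + fm σ x.val - (m+4) = fm σ x.val := by omega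
    rw [e3, fm_symm_fm σ h]
  · have e1 : (phiF σ hn x).val = m := phiF_val2 σ hn x h
    have e2 : (phiF σ hn (phiF σ hn x)).val = m := phiF_val2 σ hn _ e1
    omega
  · have e1 : (phiF σ hn x).val = m+2 := phiF_val3 σ hn x h
    have e2 : (phiF σ hn (phiF σ hn x)).val = m+1 := phiF_val4 σ hn _ e1
    omega
  · have e1 : (phiF σ hn x).val = m+1 := phiF_val4 σ hn x h
    have e2 : (phiF σ hn (phiF σ hn x)).val = m+2 := phiF_val3 σ hn _ e1
    omega
  · have e1 : (phiF σ hn x).val = m+3 := phiF_val5 σ hn x h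
    have e2 : (phiF σ hn (phiF σ hn x)).val = m+3 := phiF_val5 σ hn _ e1
    omega
  · have e1 : (phiF σ hn x).val = fm σ.symm (x.val - (m+4)) := phiF_val6 σ hn x h.1
    have hlt : fm σ.symm (x.val - (m+4)) < m := fm_lt σ.symm (by omega)
    have e2 : (phiF σ hn (phiF σ hn x)).val = m + 4 + fm σ (phiF σ hn x).val := by
      apply phiF_val1
      omega
    rw [e2, e1, fm_fm_symm σ (show x.val - (m+4) < m by omega)]
    omega

noncomputable def Phi : Equiv.Perm (Fin n) :=
  Function.Involutive.toPerm (phiF σ hn) (phiF_invol σ hn)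

lemma Phi_apply (x : Fin n) : Phi σ hn x = phiF σ hn x := rfl

lemma Phi_invol : ∀ i, Phi σ hn (Phi σ hn i) = i := fun i => phiF_invol σ hn i

lemma fm_Phi_L {p : ℕ} (h : p < m) : fm (Phi σ hn) p = m + 4 + fm σ p := by
  have hp : p < n := by omega
  rw [fm_eq' (Phi σ hn) hp, Phi_apply]
  exact phiF_val1 σ hn ⟨p, hp⟩ h

lemma fm_Phi_0 : fm (Phi σ hn) m = m := by
  have hp : m < n := by omega
  rw [fm_eq' (Phi σ hn) hp, Phi_apply]
  exact phiF_val2 σ hn ⟨m, hp⟩ rfl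

lemma fm_Phi_1 : fm (Phi σ hn) (m+1) = m+2 := by
  have hp : m+1 < n := by omega
  rw [fm_eq' (Phi σ hn) hp, Phi_apply]
  exact phiF_val3 σ hn ⟨m+1, hp⟩ rfl

lemma fm_Phi_2 : fm (Phi σ hn) (m+2) = m+1 := by
  have hp : m+2 < n := by omega
  rw [fm_eq' (Phi σ hn) hp, Phi_apply]
  exact phiF_val4 σ hn ⟨m+2, hp⟩ rfl

lemma fm_Phi_3 : fm (Phi σ hn) (m+3) = m+3 := by
  have hp : m+3 < n := by omega
  rw [fm_eq' (Phi σ hn) hp, Phi_apply]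
  exact phiF_val5 σ hn ⟨m+3, hp⟩ rfl

lemma fm_Phi_R {p : ℕ} (h1 : m+4 ≤ p) (h2 : p < n) :
    fm (Phi σ hn) p = fm σ.symm (p - (m+4)) := by
  rw [fm_eq' (Phi σ hn) h2, Phi_apply]
  exact phiF_val6 σ hn ⟨p, h2⟩ h1

end Phi

section OccIff
variable {n : ℕ}

lemma occ132_iff_U (π : Equiv.Perm (Fin n)) : occ p132 π = 1 ↔ U132 n (fm π) := by
  rw [occ_eq_one_iff p132 π (fun u v w => u < w ∧ w < v) hV132]
  exact uniq_transfer π _ (fun u v w => u < w ∧ w < v) (fun u v w => Iff.rfl)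

lemma occ213_iff_U (π : Equiv.Perm (Fin n)) :
    occ (Equiv.swap 0 1 : Equiv.Perm (Fin 3)) π = 1 ↔ U213 n (fm π) := by
  rw [occ_eq_one_iff _ π (fun u v w => v < u ∧ u < w) hV213]
  exact uniq_transfer π _ (fun u v w => v < u ∧ u < w) (fun u v w => Iff.rfl)

lemma occ123_iff_U (π : Equiv.Perm (Fin n)) :
    occ (1 : Equiv.Perm (Fin 3)) π = 1 ↔ U123 n (fm π) := by
  rw [occ_eq_one_iff _ π (fun u v w => u < v ∧ v < w) hV123]
  exact uniq_transfer π _ (fun u v w => u < v ∧ v < w) (fun u v w => Iff.rfl)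

lemma occ231_iff_U (π : Equiv.Perm (Fin n)) :
    occ (finRotate 3) π = 1 ↔ U231 n (fm π) := by
  rw [occ_eq_one_iff _ π (fun u v w => w < u ∧ u < v) hV231]
  exact uniq_transfer π _ (fun u v w => w < u ∧ u < v) (fun u v w => Iff.rfl)

end OccIff
end EI

namespace EI

lemma part_123 (N : ℕ) : cnt (1 : Equiv.Perm (Fin 3)) N = 0 := by
  rw [cnt, Finset.card_eq_zero, Finset.eq_empty_iff_forall_notMem]
  intro π hπ
  rw [Finset.mem_filter] at hπ
  obtain ⟨-, hinv, -, h132, h123⟩ := hπ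
  exact no123 (fun i hi => fm_lt π hi) (fun i hi => fm_inv π hinv hi)
    ((occ132_iff_U π).mp h132) ((occ123_iff_U π).mp h123)

lemma part_231 (N : ℕ) : cnt (finRotate 3) N = 0 := by
  rw [cnt, Finset.card_eq_zero, Finset.eq_empty_iff_forall_notMem]
  intro π hπ
  rw [Finset.mem_filter] at hπ
  obtain ⟨-, hinv, -, h132, h231⟩ := hπ
  exact no231 (fun i hi => fm_lt π hi) (fun i hi => fm_inv π hinv hi)
    ((occ132_iff_U π).mp h132) ((occ231_iff_U π).mp h231)

lemma part_213 (n : ℕ) :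
    cnt (Equiv.swap 0 1 : Equiv.Perm (Fin 3)) n
      = if 6 ≤ n ∧ n % 4 = 2 then 4 ^ ((n - 6) / 4) else 0 := by
  by_cases hc : 6 ≤ n ∧ n % 4 = 2
  · rw [if_pos hc]
    obtain ⟨m, hn, hmodd⟩ : ∃ m, n = 2*m+4 ∧ m % 2 = 1 := ⟨(n-4)/2, by omega, by omega⟩
    subst hn
    have hrfl : 2*m+4 = 2*m+4 := rfl
    have hcard : (A m).card = cnt (Equiv.swap 0 1 : Equiv.Perm (Fin 3)) (2*m+4) := by
      rw [cnt]
      apply Finset.card_bij (fun σ _ => Phi σ hrfl)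
      · -- maps to the filter
        intro σ ha
        have hAv := (mem_A σ).mp ha
        have hav132 : ∀ i j k, i < j → j < k → k < m →
            ¬(fm σ i < fm σ k ∧ fm σ k < fm σ j) :=
          fun i j k hij hjk hk => hAv.1 i (by omega) j (by omega) k hk hij hjk
        have hav213 : ∀ i j k, i < j → j < k → k < m →
            ¬(fm σ j < fm σ i ∧ fm σ i < fm σ k) :=
          fun i j k hij hjk hk => hAv.2 i (by omega) j (by omega) k hk hij hjk
        rw [Finset.mem_filter]
        refine ⟨Finset.mem_univ _, Phi_invol σ hrfl, ?_, ?_, ?_⟩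
        · -- even number of inversions
          have hup := upcard (Phi σ hrfl) m rfl (fm_Phi_0 σ hrfl) (fm_Phi_1 σ hrfl)
            (fm_Phi_2 σ hrfl) (fm_Phi_3 σ hrfl)
            (fun p hp => by rw [fm_Phi_L σ hrfl hp]; omega)
            (fun p h1 h2 => by
              rw [fm_Phi_R σ hrfl h1 h2]
              have := fm_lt σ.symm (show p - (m+4) < m by omega)
              omega)
          have hpar := inversions_parity (Phi σ hrfl) (Phi_invol σ hrfl)
          rw [hup] at hpar
          rw [Nat.even_iff]
          omega
        · rw [occ132_iff_U]
          exact gU132 (fun p hp => fm_lt σ hp) (fun p hp => fm_lt σ.symm hp)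
            (fun p hp => fm_fm_symm σ hp)
            hav132
            (fun p hp => fm_Phi_L σ hrfl hp) (fm_Phi_0 σ hrfl) (fm_Phi_1 σ hrfl)
            (fm_Phi_2 σ hrfl) (fm_Phi_3 σ hrfl)
            (fun p h1 h2 => fm_Phi_R σ hrfl h1 h2)
        · rw [occ213_iff_U]
          exact gU213 (fun p hp => fm_lt σ hp) (fun p hp => fm_lt σ.symm hp)
            (fun p hp => fm_fm_symm σ hp)
            hav213
            (fun p hp => fm_Phi_L σ hrfl hp) (fm_Phi_0 σ hrfl) (fm_Phi_1 σ hrfl)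
            (fm_Phi_2 σ hrfl) (fm_Phi_3 σ hrfl)
            (fun p h1 h2 => fm_Phi_R σ hrfl h1 h2)
      · -- injectivity
        intro σ hσ σ' hσ' heq
        apply Equiv.ext
        intro x
        apply Fin.ext
        rw [apply_val_eq_fm, apply_val_eq_fm]
        have h1 : fm (Phi σ hrfl) x.val = fm (Phi σ' hrfl) x.val := by rw [heq]
        rw [fm_Phi_L σ hrfl x.isLt, fm_Phi_L σ' hrfl x.isLt] at h1
        omega
      · -- surjectivity
        intro π hπ
        rw [Finset.mem_filter] at hπ
        obtain ⟨-, hinv, heven, h132, h213⟩ := hπ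
        have hb : ∀ i, i < 2*m+4 → fm π i < 2*m+4 := fun i hi => fm_lt π hi
        have hv : ∀ i, i < 2*m+4 → fm π (fm π i) = i := fun i hi => fm_inv π hinv hi
        have hU132 := (occ132_iff_U π).mp h132
        have hU213 := (occ213_iff_U π).mp h213
        obtain ⟨a, hna, hfa, hf1, hf2, hf3, hL, hR⟩ := classify hb hv hU132 hU213
        have ham : m = a := by omega
        subst ham
        have hbnd : ∀ x : Fin m, fm π x.val - (m+4) < m := by
          intro x
          have h1 := hL x.val x.isLt
          have h2 := fm_lt π (show x.val < 2*m+4 by omega)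
          omega
        have hσinj : Function.Injective (fun x : Fin m => (⟨fm π x.val - (m+4), hbnd x⟩ : Fin m)) := by
          intro x y hxy
          have hvv := congrArg Fin.val hxy
          simp only at hvv
          have h1 := hL x.val x.isLt
          have h2 := hL y.val y.isLt
          have := fm_inj π (show x.val < 2*m+4 by omega) (show y.val < 2*m+4 by omega)
            (by omega)
          exact Fin.ext (by omega)
        set σ : Equiv.Perm (Fin m) := Equiv.ofBijective _
          (Finite.injective_iff_bijective.mp hσinj) with hσdef
        have hfmσ : ∀ p, p < m → fm σ p = fm π p - (m+4) := by
          intro p hp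
          rw [fm_eq' σ hp]
          rfl
        -- the gadget occurrences of π
        obtain ⟨a', b', c', hocc', hu'⟩ := hU132
        obtain ⟨d', e', f', hocc2', hu2'⟩ := hU213
        have hg1 := hu' m (m+1) (m+2)
          ⟨by omega, by omega, by omega, by rw [hfa, hf2]; omega, by rw [hf2, hf1]; omega⟩
        have hg2 := hu2' (m+1) (m+2) (m+3)
          ⟨by omega, by omega, by omega, by rw [hf2, hf1]; omega, by rw [hf1, hf3]; omega⟩
        have hAvσ : AvN m (fm σ) := by
          constructor
          · intro i hi j hj k hk hij hjk ⟨h1, h2⟩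
            rw [hfmσ i hi, hfmσ k hk] at h1
            rw [hfmσ k hk, hfmσ j hj] at h2
            have bi := hL i hi
            have bj := hL j hj
            have bk := hL k hk
            have := hu' i j k ⟨hij, hjk, by omega, by omega, by omega⟩
            omega
          · intro i hi j hj k hk hij hjk ⟨h1, h2⟩
            rw [hfmσ j hj, hfmσ i hi] at h1
            rw [hfmσ i hi, hfmσ k hk] at h2
            have bi := hL i hi
            have bj := hL j hj
            have bk := hL k hk
            have := hu2' i j k ⟨hij, hjk, by omega, by omega, by omega⟩
            omega
        refine ⟨σ, (mem_A σ).mpr hAvσ, ?_⟩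
        apply Equiv.ext
        intro x
        apply Fin.ext
        rw [apply_val_eq_fm, apply_val_eq_fm]
        rcases (show x.val < m ∨ x.val = m ∨ x.val = m+1 ∨ x.val = m+2 ∨ x.val = m+3 ∨
            (m+4 ≤ x.val ∧ x.val < 2*m+4) from by have := x.isLt; omega) with
          h | h | h | h | h | h
        · rw [fm_Phi_L σ hrfl h, hfmσ x.val h]
          have := hL x.val h
          omega
        · rw [h, fm_Phi_0 σ hrfl, hfa]
        · rw [h, fm_Phi_1 σ hrfl, hf1]
        · rw [h, fm_Phi_2 σ hrfl, hf2]
        · rw [h, fm_Phi_3 σ hrfl, hf3]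
        · rw [fm_Phi_R σ hrfl h.1 h.2]
          have hq : fm π x.val < m := hR x.val h.1 h.2
          have hqq : fm π (fm π x.val) = x.val := hv x.val h.2
          have hfq : fm σ (fm π x.val) = x.val - (m+4) := by
            rw [hfmσ (fm π x.val) hq, hqq]
          have := fm_symm_fm σ hq
          rw [hfq] at this
          rw [this]
    rw [← hcard]
    have h2 := card_A_pow (m-1)
    rw [show (m-1)+1 = m from by omega] at h2
    rw [h2]
    rw [show (4:ℕ) = 2^2 from rfl, ← pow_mul]
    congr 1
    omega
  · rw [if_neg hc]
    rw [cnt, Finset.card_eq_zero, Finset.eq_empty_iff_forall_notMem]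
    intro π hπ
    rw [Finset.mem_filter] at hπ
    obtain ⟨-, hinv, heven, h132, h213⟩ := hπ
    have hb : ∀ i, i < n → fm π i < n := fun i hi => fm_lt π hi
    have hv : ∀ i, i < n → fm π (fm π i) = i := fun i hi => fm_inv π hinv hi
    obtain ⟨a, hna, hfa, hf1, hf2, hf3, hL, hR⟩ :=
      classify hb hv ((occ132_iff_U π).mp h132) ((occ213_iff_U π).mp h213)
    have hup := upcard π a hna hfa hf1 hf2 hf3 (fun p hp => (hL p hp).1) hR
    have hpar := inversions_parity π hinv
    rw [hup] at hpar
    rw [Nat.even_iff] at heven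
    exact hc ⟨by omega, by omega⟩

end EI

/-- The number of even involutions of length n containing 132 exactly once and
213 exactly once is 4^((n−6)/4) if n ≥ 6 and n ≡ 2 (mod 4), else 0; moreover
no even involution contains 132 exactly once and 123 (resp. 231) exactly once. -/
theorem even_involutions_containing_132_once_and_213_once (n : ℕ) :
    (cnt (Equiv.swap 0 1 : Equiv.Perm (Fin 3)) n
      = if 6 ≤ n ∧ n % 4 = 2 then 4 ^ ((n - 6) / 4) else 0) ∧
    (∀ m : ℕ, cnt (1 : Equiv.Perm (Fin 3)) m = 0) ∧
    (∀ m : ℕ, cnt (finRotate 3) m = 0) := by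
  exact ⟨EI.part_213 n, EI.part_123, EI.part_231⟩
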